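/- arXiv:1805.12579 — 3 statements merged into one kernel-verified Lean document; each statement's English description precedes it below -/
import Mathlib

section
/- The real number ∛2 does not lie in any field extension of ℚ obtained by a finite tower of quadratic extensions; that is, if ℚ = F₀ ⊆ F₁ ⊆ ... ⊆ Fₙ ⊆ ℝ with [Fᵢ₊₁ : Fᵢ] = 2 for all i, then ∛2 ∉ Fₙ. -/
open Polynomial IntermediateField

theorem cbrt_two_not_in_quadratic_tower
    (n : ℕ) (F : ℕ → IntermediateField ℚ ℝ)
    (h0 : F 0 = ⊥)
    (hle : ∀ i, F i ≤ F (i + 1))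
    (hdeg : ∀ i, Module.finrank (F i) (IntermediateField.extendScalars (hle i)) = 2) :
    (2 : ℝ) ^ ((1 : ℝ) / 3) ∉ F n := by
  intro hx
  set x : ℝ := (2 : ℝ) ^ ((1 : ℝ) / 3) with hxdef
  have hx3 : x ^ 3 = 2 := by
    rw [hxdef, ← Real.rpow_natCast ((2:ℝ) ^ ((1:ℝ)/3)) 3, ← Real.rpow_mul (by norm_num)]
    norm_num
  -- finrank of the tower
  have hrk : ∀ m, Module.finrank ℚ (F m) = 2 ^ m := by
    intro m
    induction m with
    | zero =>
      rw [h0, pow_zero]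
      exact IntermediateField.finrank_bot
    | succ i ih =>
      have h := IntermediateField.finrank_bot_mul_relfinrank (hle i)
      rw [IntermediateField.relfinrank_eq_finrank_of_le (hle i), hdeg i, ih] at h
      rw [← h, pow_succ]
  have hfin : FiniteDimensional ℚ (F n) := by
    apply FiniteDimensional.of_finrank_pos
    rw [hrk n]
    positivity
  -- irrationality of x
  have hxirr : Irrational x := by
    refine irrational_nrt_of_notint_nrt 3 2 (by exact_mod_cast hx3) ?_ (by norm_num)
    rintro ⟨y, hy⟩
    have hy3 : (y : ℝ) ^ 3 = 2 := by rw [← hy]; exact hx3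
    have : y ^ 3 = 2 := by exact_mod_cast hy3
    have h1 : 1 ≤ y := by nlinarith [this, sq_nonneg y]
    have h2 : y ≤ 1 := by nlinarith [this, sq_nonneg y]
    have hy1 : y = 1 := le_antisymm h2 h1
    rw [hy1] at this
    norm_num at this
  -- minpoly of x over ℚ is X^3 - 2
  have hirr : Irreducible (X ^ 3 - C (2 : ℚ)) := by
    apply X_pow_sub_C_irreducible_of_prime (by norm_num)
    intro b hb
    have hb' : (b : ℝ) ^ 3 = 2 := by exact_mod_cast congrArg (fun q : ℚ => (q : ℝ)) hb
    have hbx : (b : ℝ) = x :=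
      (Odd.strictMono_pow (R := ℝ) (by decide : Odd 3)).injective (by simp [hb', hx3])
    exact hxirr ⟨b, hbx⟩
  have hmin : minpoly ℚ x = X ^ 3 - C (2 : ℚ) := by
    refine (minpoly.eq_of_irreducible_of_monic hirr ?_ ?_).symm
    · simp [hx3]
    · apply Polynomial.monic_X_pow_sub_C _ (by norm_num)
  -- element of F n
  set y : F n := ⟨x, hx⟩ with hy
  have hyx : algebraMap (F n) ℝ y = x := rfl
  have hminy : minpoly ℚ y = minpoly ℚ x := by
    rw [← hyx]
    exact (minpoly.algebraMap_eq (algebraMap (F n) ℝ).injective y).symm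
  have hyint : IsIntegral ℚ y := IsIntegral.of_finite ℚ y
  have hdvd := minpoly.degree_dvd hyint
  rw [hminy, hmin, hrk n] at hdvd
  have h3 : (X ^ 3 - C (2 : ℚ)).natDegree = 3 := by
    rw [Polynomial.natDegree_X_pow_sub_C]
  rw [h3] at hdvd
  have h23 : ¬ (3 ∣ 2 ^ n) := by
    intro h
    have := Nat.Coprime.eq_one_of_dvd (Nat.Coprime.pow_right n (by norm_num)) h
    omega
  exact h23 hdvd
end

section
/- Four distinct points A, B, C, D in ℚ² in general position (no three collinear, no two of the six connecting lines parallel) generate, under straightedge-only derivability, a set of points that is dense in ℝ² (indeed equals all of ℚ²... precisely: every point of ℚ² is derivable from {A, B, C, D}). -/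
def lineThrough (a b : ℝ × ℝ) : Set (ℝ × ℝ) := {p | ∃ t : ℝ, p = a + t • (b - a)}

/-- Straightedge-only derivability. -/
inductive SDeriv (S : Set (ℝ × ℝ)) : ℝ × ℝ → Prop
  | base {p : ℝ × ℝ} : p ∈ S → SDeriv S p
  | inter {a b c d p : ℝ × ℝ} : SDeriv S a → SDeriv S b → SDeriv S c → SDeriv S d →
      a ≠ b → c ≠ d → lineThrough a b ≠ lineThrough c d →
      p ∈ lineThrough a b → p ∈ lineThrough c d → SDeriv S p

/-- Embedding of the rational plane into the real plane. -/
def emb (p : ℚ × ℚ) : ℝ × ℝ := ((p.1 : ℝ), (p.2 : ℝ))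

/-- Two nonzero direction vectors are parallel iff their cross product vanishes. -/
def QParallel (u v : ℚ × ℚ) : Prop := u.1 * v.2 - u.2 * v.1 = 0

noncomputable section

namespace SGAux

lemma emb_inj : Function.Injective emb := by
  intro a b h
  have h1 : ((a.1 : ℝ)) = (b.1 : ℝ) := congrArg Prod.fst h
  have h2 : ((a.2 : ℝ)) = (b.2 : ℝ) := congrArg Prod.snd h
  exact Prod.ext (by exact_mod_cast h1) (by exact_mod_cast h2)

lemma mem_lineThrough_iff {a b : ℝ × ℝ} (hab : a ≠ b) (p : ℝ × ℝ) :
    p ∈ lineThrough a b ↔ (p.1 - a.1) * (b.2 - a.2) - (p.2 - a.2) * (b.1 - a.1) = 0 := by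
  constructor
  · rintro ⟨t, rfl⟩
    simp only [Prod.fst_add, Prod.snd_add, Prod.smul_fst, Prod.smul_snd, Prod.fst_sub,
      Prod.snd_sub, smul_eq_mul]
    ring
  · intro h
    by_cases h1 : b.1 - a.1 = 0
    · have h2 : b.2 - a.2 ≠ 0 := by
        intro h2
        apply hab
        apply Prod.ext <;> [linarith; linarith]
      refine ⟨(p.2 - a.2) / (b.2 - a.2), ?_⟩
      apply Prod.ext
      · simp only [Prod.fst_add, Prod.smul_fst, smul_eq_mul, Prod.fst_sub]
        have : (p.1 - a.1) * (b.2 - a.2) = 0 := by linear_combination h + (p.2 - a.2) * h1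
        have hp1 : p.1 - a.1 = 0 := by
          rcases mul_eq_zero.1 this with h' | h'
          · exact h'
          · exact absurd h' h2
        field_simp
        linarith
      · simp only [Prod.snd_add, Prod.smul_snd, smul_eq_mul, Prod.snd_sub]
        field_simp
        ring
    · refine ⟨(p.1 - a.1) / (b.1 - a.1), ?_⟩
      apply Prod.ext
      · simp only [Prod.fst_add, Prod.smul_fst, smul_eq_mul, Prod.fst_sub]
        field_simp
        ring
      · simp only [Prod.snd_add, Prod.smul_snd, smul_eq_mul, Prod.snd_sub]
        field_simp
        linear_combination -h

lemma left_mem_lineThrough (a b : ℝ × ℝ) : a ∈ lineThrough a b :=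
  ⟨0, by simp⟩

lemma right_mem_lineThrough (a b : ℝ × ℝ) : b ∈ lineThrough a b :=
  ⟨1, by simp⟩

def qcross (a b : ℚ × ℚ) : ℚ := a.1 * b.2 - a.2 * b.1

lemma qmem_iff {a b : ℚ × ℚ} (hab : a ≠ b) (p : ℚ × ℚ) :
    emb p ∈ lineThrough (emb a) (emb b) ↔ qcross (p - a) (b - a) = 0 := by
  rw [mem_lineThrough_iff (fun h => hab (emb_inj h))]
  unfold qcross emb
  simp only [Prod.fst_sub, Prod.snd_sub]
  constructor
  · intro h
    have : ((((p.1 - a.1) * (b.2 - a.2) - (p.2 - a.2) * (b.1 - a.1) : ℚ)) : ℝ) = 0 := by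
      push_cast; linear_combination h
    exact_mod_cast this
  · intro h
    have : ((((p.1 - a.1) * (b.2 - a.2) - (p.2 - a.2) * (b.1 - a.1) : ℚ)) : ℝ) = 0 := by
      exact_mod_cast h
    push_cast at this
    linarith [this]

/-- Affine equivariance of straightedge derivability. -/
lemma sderiv_map (m11 m12 m21 m22 t1 t2 : ℝ) (hdet : m11 * m22 - m12 * m21 ≠ 0)
    (G : ℝ × ℝ → ℝ × ℝ)
    (hG : ∀ w, G w = (m11 * w.1 + m12 * w.2 + t1, m21 * w.1 + m22 * w.2 + t2))
    {S : Set (ℝ × ℝ)} {p : ℝ × ℝ} (h : SDeriv S p) : SDeriv (G '' S) (G p) := by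
  have Ginj : Function.Injective G := by
    intro x y hxy
    have e1 : m11 * x.1 + m12 * x.2 + t1 = m11 * y.1 + m12 * y.2 + t1 := by
      have := congrArg Prod.fst hxy; rw [hG, hG] at this; exact this
    have e2 : m21 * x.1 + m22 * x.2 + t2 = m21 * y.1 + m22 * y.2 + t2 := by
      have := congrArg Prod.snd hxy; rw [hG, hG] at this; exact this
    have d1 : (m11 * m22 - m12 * m21) * (x.1 - y.1) = 0 := by linear_combination m22 * e1 - m12 * e2
    have d2 : (m11 * m22 - m12 * m21) * (x.2 - y.2) = 0 := by linear_combination m11 * e2 - m21 * e1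
    have hx1 : x.1 = y.1 := by
      rcases mul_eq_zero.1 d1 with h' | h'
      · exact absurd h' hdet
      · linarith
    have hx2 : x.2 = y.2 := by
      rcases mul_eq_zero.1 d2 with h' | h'
      · exact absurd h' hdet
      · linarith
    exact Prod.ext hx1 hx2
  have haff : ∀ (x y : ℝ × ℝ) (s : ℝ), G (x + s • (y - x)) = G x + s • (G y - G x) := by
    intro x y s
    rw [hG, hG, hG]
    apply Prod.ext <;>
      simp only [Prod.fst_add, Prod.snd_add, Prod.smul_fst, Prod.smul_snd, Prod.fst_sub,
        Prod.snd_sub, smul_eq_mul] <;> ring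
  have hline : ∀ x y : ℝ × ℝ, G '' lineThrough x y = lineThrough (G x) (G y) := by
    intro x y
    ext w
    constructor
    · rintro ⟨q, ⟨s, rfl⟩, rfl⟩
      exact ⟨s, (haff x y s)⟩
    · rintro ⟨s, rfl⟩
      exact ⟨x + s • (y - x), ⟨s, rfl⟩, (haff x y s)⟩
  induction h with
  | base hp => exact SDeriv.base (Set.mem_image_of_mem G hp)
  | @inter a' b' c' d' p' _ _ _ _ hab hcd hl h1 h2 iha ihb ihc ihd =>
    refine SDeriv.inter iha ihb ihc ihd (fun h => hab (Ginj h)) (fun h => hcd (Ginj h)) ?_ ?_ ?_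
    · intro hEq
      apply hl
      have : G '' lineThrough a' b' = G '' lineThrough c' d' := by
        rw [hline, hline, hEq]
      exact (Set.image_injective.mpr Ginj) this
    · rw [← hline]; exact Set.mem_image_of_mem G h1
    · rw [← hline]; exact Set.mem_image_of_mem G h2

end SGAux

namespace SGAux

/-- Parameter pack for the normalized configuration. -/
structure Params where
  u : ℚ
  v : ℚ
  hu : u ≠ 0
  hv : v ≠ 0
  hu1 : u + 1 ≠ 0
  hv1 : v + 1 ≠ 0
  hw : u + v + 1 ≠ 0
  hm : u + v + 2 ≠ 0

def lam (P : Params) (e : ℚ × ℚ × ℚ) : ℚ := P.u * e.1 + P.v * e.2.1 + e.2.2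

def psi (P : Params) (e : ℚ × ℚ × ℚ) : ℚ × ℚ :=
  ((P.u + 1) * e.1 / lam P e, (P.v + 1) * e.2.1 / lam P e)

def dpt (P : Params) : ℚ × ℚ := ((P.u + 1) / (P.u + P.v + 1), (P.v + 1) / (P.u + P.v + 1))

def sbase (P : Params) : Set (ℝ × ℝ) :=
  {emb (0, 0), emb (1, 0), emb (0, 1), emb (dpt P)}

def Sh (P : Params) (e : ℚ × ℚ × ℚ) : Prop :=
  lam P e ≠ 0 ∧ SDeriv (sbase P) (emb (psi P e))

def cr (a b : ℚ × ℚ × ℚ) : ℚ × ℚ × ℚ :=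
  (a.2.1 * b.2.2 - a.2.2 * b.2.1, a.2.2 * b.1 - a.1 * b.2.2, a.1 * b.2.1 - a.2.1 * b.1)

def dt (a b : ℚ × ℚ × ℚ) : ℚ := a.1 * b.1 + a.2.1 * b.2.1 + a.2.2 * b.2.2

lemma lam_zero (P : Params) : lam P 0 = 0 := by simp [lam]

lemma cr_zero_left (x : ℚ × ℚ × ℚ) : cr 0 x = 0 := by simp [cr, Prod.ext_iff]

lemma cr_zero_right (x : ℚ × ℚ × ℚ) : cr x 0 = 0 := by simp [cr, Prod.ext_iff]

lemma dt_comm (x y : ℚ × ℚ × ℚ) : dt x y = dt y x := by simp [dt]; ring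

lemma dt_cr_self (x y : ℚ × ℚ × ℚ) : dt (cr x y) x = 0 := by simp [dt, cr]; ring

lemma dt_smul (k : ℚ) (z w : ℚ × ℚ × ℚ) : dt (k • z) w = k * dt z w := by
  simp [dt, Prod.smul_def, smul_eq_mul]; ring

lemma triple_prod (n c d : ℚ × ℚ × ℚ) : cr n (cr c d) = dt n d • c - dt n c • d := by
  simp [cr, dt, Prod.ext_iff, Prod.smul_def, smul_eq_mul]
  refine ⟨by ring, by ring, by ring⟩

lemma psi_ne (P : Params) {a b : ℚ × ℚ × ℚ} (la : lam P a ≠ 0) (lb : lam P b ≠ 0)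
    (h : cr a b ≠ 0) : psi P a ≠ psi P b := by
  intro heq
  apply h
  have h1 : (P.u + 1) * a.1 / lam P a = (P.u + 1) * b.1 / lam P b := congrArg Prod.fst heq
  have h2 : (P.v + 1) * a.2.1 / lam P a = (P.v + 1) * b.2.1 / lam P b := congrArg Prod.snd heq
  rw [div_eq_div_iff la lb] at h1 h2
  have e1 : a.1 * lam P b = b.1 * lam P a := by
    have := mul_left_cancel₀ P.hu1 (by linarith [h1] : (P.u + 1) * (a.1 * lam P b) = (P.u + 1) * (b.1 * lam P a))
    exact this
  have e2 : a.2.1 * lam P b = b.2.1 * lam P a := by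
    have := mul_left_cancel₀ P.hv1 (by linarith [h2] : (P.v + 1) * (a.2.1 * lam P b) = (P.v + 1) * (b.2.1 * lam P a))
    exact this
  have e3 : a.2.2 * lam P b = b.2.2 * lam P a := by
    have la' : lam P a = P.u * a.1 + P.v * a.2.1 + a.2.2 := rfl
    have lb' : lam P b = P.u * b.1 + P.v * b.2.1 + b.2.2 := rfl
    linear_combination (-P.u) * e1 + (-P.v) * e2 + (-(lam P b)) * la' + (lam P a) * lb'
  have c1 : (cr a b).1 * lam P b = 0 := by
    show (a.2.1 * b.2.2 - a.2.2 * b.2.1) * lam P b = 0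
    linear_combination b.2.2 * e2 - b.2.1 * e3
  have c2 : (cr a b).2.1 * lam P b = 0 := by
    show (a.2.2 * b.1 - a.1 * b.2.2) * lam P b = 0
    linear_combination b.1 * e3 - b.2.2 * e1
  have c3 : (cr a b).2.2 * lam P b = 0 := by
    show (a.1 * b.2.1 - a.2.1 * b.1) * lam P b = 0
    linear_combination b.2.1 * e1 - b.1 * e2
  have z1 : (cr a b).1 = 0 := by rcases mul_eq_zero.1 c1 with h | h; exact h; exact absurd h lb
  have z2 : (cr a b).2.1 = 0 := by rcases mul_eq_zero.1 c2 with h | h; exact h; exact absurd h lb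
  have z3 : (cr a b).2.2 = 0 := by rcases mul_eq_zero.1 c3 with h | h; exact h; exact absurd h lb
  exact Prod.ext z1 (Prod.ext z2 z3)

lemma I1 (P : Params) (a b z : ℚ × ℚ × ℚ) (la : lam P a ≠ 0) (lb : lam P b ≠ 0)
    (lz : lam P z ≠ 0) :
    qcross (psi P z - psi P a) (psi P b - psi P a) =
      -((P.u + 1) * (P.v + 1)) * dt z (cr a b) / (lam P z * lam P a * lam P b) := by
  unfold qcross psi dt cr lam at *
  simp only [Prod.fst_sub, Prod.snd_sub]
  field_simp
  ring

lemma qcross_zero_of_dt (P : Params) {a b z : ℚ × ℚ × ℚ} (la : lam P a ≠ 0)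
    (lb : lam P b ≠ 0) (lz : lam P z ≠ 0) (h : dt z (cr a b) = 0) :
    qcross (psi P z - psi P a) (psi P b - psi P a) = 0 := by
  rw [I1 P a b z la lb lz, h]; simp

lemma dt_zero_of_qcross (P : Params) {a b z : ℚ × ℚ × ℚ} (la : lam P a ≠ 0)
    (lb : lam P b ≠ 0) (lz : lam P z ≠ 0)
    (h : qcross (psi P z - psi P a) (psi P b - psi P a) = 0) : dt z (cr a b) = 0 := by
  rw [I1 P a b z la lb lz] at h
  rw [div_eq_zero_iff] at h
  rcases h with h | h
  · rcases mul_eq_zero.1 h with h' | h'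
    · exact absurd (neg_eq_zero.1 h') (mul_ne_zero P.hu1 P.hv1)
    · exact h'
  · exact absurd h (mul_ne_zero (mul_ne_zero lz la) lb)

/-- The master intersection lemma: all straightedge steps go through this. -/
lemma master (P : Params) {a b c d z : ℚ × ℚ × ℚ} {k : ℚ}
    (ha : Sh P a) (hb : Sh P b) (hc : Sh P c) (hd : Sh P d)
    (hz : cr (cr a b) (cr c d) = k • z) (hk : k ≠ 0) (hlz : lam P z ≠ 0) : Sh P z := by
  obtain ⟨la, da⟩ := ha
  obtain ⟨lb, db⟩ := hb
  obtain ⟨lc, dc⟩ := hc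
  obtain ⟨ld, dd⟩ := hd
  have hzne : z ≠ 0 := fun h => hlz (by rw [h]; exact lam_zero P)
  have hkz : cr (cr a b) (cr c d) ≠ 0 := by
    rw [hz]; exact smul_ne_zero hk hzne
  have hcrab : cr a b ≠ 0 := fun h => hkz (by rw [h, cr_zero_left])
  have hcrcd : cr c d ≠ 0 := fun h => hkz (by rw [h, cr_zero_right])
  have pab : psi P a ≠ psi P b := psi_ne P la lb hcrab
  have pcd : psi P c ≠ psi P d := psi_ne P lc ld hcrcd
  have dz1 : dt z (cr a b) = 0 := by
    have h0 : dt (cr (cr a b) (cr c d)) (cr a b) = 0 := dt_cr_self _ _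
    rw [hz, dt_smul] at h0
    rcases mul_eq_zero.1 h0 with h' | h'
    · exact absurd h' hk
    · exact h'
  have dz2 : dt z (cr c d) = 0 := by
    have h0 : dt (cr (cr c d) (cr a b)) (cr c d) = 0 := dt_cr_self _ _
    have hsym : cr (cr c d) (cr a b) = -(k • z) := by
      have : cr (cr c d) (cr a b) = -cr (cr a b) (cr c d) := by
        simp [cr, Prod.ext_iff]; refine ⟨by ring, by ring, by ring⟩
      rw [this, hz]
    rw [hsym] at h0
    have : dt (k • z) (cr c d) = 0 := by
      have hneg : dt (-(k • z)) (cr c d) = -dt (k • z) (cr c d) := by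
        simp [dt, Prod.ext_iff]; ring
      rw [hneg] at h0; linarith
    rw [dt_smul] at this
    rcases mul_eq_zero.1 this with h' | h'
    · exact absurd h' hk
    · exact h'
  have m1 : emb (psi P z) ∈ lineThrough (emb (psi P a)) (emb (psi P b)) := by
    rw [qmem_iff pab]
    exact qcross_zero_of_dt P la lb hlz dz1
  have m2 : emb (psi P z) ∈ lineThrough (emb (psi P c)) (emb (psi P d)) := by
    rw [qmem_iff pcd]
    exact qcross_zero_of_dt P lc ld hlz dz2
  refine ⟨hlz, SDeriv.inter da db dc dd (fun h => pab (emb_inj h)) (fun h => pcd (emb_inj h))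
    ?_ m1 m2⟩
  intro hEq
  have mc : emb (psi P c) ∈ lineThrough (emb (psi P a)) (emb (psi P b)) := by
    rw [hEq]; exact left_mem_lineThrough _ _
  have md : emb (psi P d) ∈ lineThrough (emb (psi P a)) (emb (psi P b)) := by
    rw [hEq]; exact right_mem_lineThrough _ _
  have dc1 : dt c (cr a b) = 0 := dt_zero_of_qcross P la lb lc ((qmem_iff pab _).1 mc)
  have dd1 : dt d (cr a b) = 0 := dt_zero_of_qcross P la lb ld ((qmem_iff pab _).1 md)
  apply hkz
  rw [triple_prod]
  rw [dt_comm _ d, dt_comm _ c, dd1, dc1]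
  simp

end SGAux

namespace SGAux

lemma lam_pt (P : Params) (x y : ℚ) : lam P (x, y, 1) = P.u * x + P.v * y + 1 := rfl

lemma sh_E0 (P : Params) : Sh P (0, 0, 1) := by
  refine ⟨by rw [lam_pt]; norm_num, ?_⟩
  have : psi P (0, 0, 1) = (0, 0) := by
    unfold psi; rw [lam_pt]; norm_num
  rw [this]
  exact SDeriv.base (by simp [sbase])

lemma sh_Ex (P : Params) : Sh P (1, 0, 1) := by
  have h : lam P (1, 0, 1) = P.u + 1 := by rw [lam_pt]; ring
  refine ⟨by rw [h]; exact P.hu1, ?_⟩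
  have : psi P (1, 0, 1) = (1, 0) := by
    unfold psi; rw [h, Prod.ext_iff]
    constructor
    · show (P.u + 1) * 1 / (P.u + 1) = 1
      rw [mul_one]; exact div_self P.hu1
    · show (P.v + 1) * 0 / (P.u + 1) = 0
      simp
  rw [this]
  exact SDeriv.base (by simp [sbase])

lemma sh_Ey (P : Params) : Sh P (0, 1, 1) := by
  have h : lam P (0, 1, 1) = P.v + 1 := by rw [lam_pt]; ring
  refine ⟨by rw [h]; exact P.hv1, ?_⟩
  have : psi P (0, 1, 1) = (0, 1) := by
    unfold psi; rw [h, Prod.ext_iff]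
    constructor
    · show (P.u + 1) * 0 / (P.v + 1) = 0
      simp
    · show (P.v + 1) * 1 / (P.v + 1) = 1
      rw [mul_one]; exact div_self P.hv1
  rw [this]
  exact SDeriv.base (by simp [sbase])

lemma sh_Ed (P : Params) : Sh P (1, 1, 1) := by
  have h : lam P (1, 1, 1) = P.u + P.v + 1 := by rw [lam_pt]; ring
  refine ⟨by rw [h]; exact P.hw, ?_⟩
  have : psi P (1, 1, 1) = dpt P := by
    unfold psi dpt; rw [h, Prod.ext_iff]
    constructor
    · show (P.u + 1) * 1 / (P.u + P.v + 1) = (P.u + 1) / (P.u + P.v + 1)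
      rw [mul_one]
    · show (P.v + 1) * 1 / (P.u + P.v + 1) = (P.v + 1) / (P.u + P.v + 1)
      rw [mul_one]
  rw [this]
  exact SDeriv.base (by simp [sbase])

lemma sh_Px (P : Params) : Sh P (1, 0, 0) := by
  refine master P (sh_E0 P) (sh_Ex P) (sh_Ey P) (sh_Ed P) (k := -1) ?_ (by norm_num) ?_
  · norm_num [cr, Prod.ext_iff, Prod.smul_def]
  · simpa [lam] using P.hu

lemma sh_Qy (P : Params) : Sh P (0, 1, 0) := by
  refine master P (sh_E0 P) (sh_Ey P) (sh_Ex P) (sh_Ed P) (k := 1) ?_ (by norm_num) ?_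
  · norm_num [cr, Prod.ext_iff, Prod.smul_def]
  · simpa [lam] using P.hv

lemma sh_M (P : Params) : Sh P (1, 1, 2) := by
  refine master P (sh_E0 P) (sh_Ed P) (sh_Ex P) (sh_Ey P) (k := 1) ?_ (by norm_num) ?_
  · norm_num [cr, Prod.ext_iff, Prod.smul_def]
  · simpa [lam] using P.hm

lemma lam_smul (P : Params) (k : ℚ) (e : ℚ × ℚ × ℚ) : lam P (k • e) = k * lam P e := by
  simp [lam, Prod.smul_def, smul_eq_mul]; ring

lemma sh_scale (P : Params) {e : ℚ × ℚ × ℚ} {k : ℚ} (hk : k ≠ 0) (h : Sh P e) :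
    Sh P (k • e) := by
  refine ⟨by rw [lam_smul]; exact mul_ne_zero hk h.1, ?_⟩
  have hl := h.1
  have : psi P (k • e) = psi P e := by
    unfold psi
    rw [lam_smul, Prod.ext_iff]
    have h1 : (k • e).1 = k * e.1 := rfl
    have h2 : (k • e).2.1 = k * e.2.1 := rfl
    rw [h1, h2]
    constructor <;> field_simp
  rw [this]
  exact h.2

lemma sh_halfM (P : Params) : Sh P (1/2, 1/2, 1) := by
  have := sh_scale P (k := 1/2) (by norm_num) (sh_M P)
  convert this using 2 <;> norm_num [Prod.smul_def, Prod.ext_iff]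

/-- Intersect the line through two derived points with a horizontal line at height `r`. -/
lemma cut_row (P : Params) {p q : ℚ × ℚ} {r t : ℚ}
    (hp : Sh P (p.1, p.2, 1)) (hq : Sh P (q.1, q.2, 1)) (hr : ∃ j, Sh P (j, r, 1))
    (hcol : (t - p.1) * (q.2 - p.2) - (r - p.2) * (q.1 - p.1) = 0)
    (hne : p.2 ≠ q.2) (hlt : lam P (t, r, 1) ≠ 0) : Sh P (t, r, 1) := by
  obtain ⟨j, hj⟩ := hr
  refine master P hp hq hj (sh_Px P) (k := p.2 - q.2) ?_ (sub_ne_zero.2 hne) hlt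
  simp only [cr, Prod.ext_iff, Prod.smul_def, smul_eq_mul]
  refine ⟨by linear_combination hcol, by ring, by ring⟩

/-- Intersect the line through two derived points with a vertical line at abscissa `t`. -/
lemma cut_col (P : Params) {p q : ℚ × ℚ} {t s : ℚ}
    (hp : Sh P (p.1, p.2, 1)) (hq : Sh P (q.1, q.2, 1)) (ht : ∃ y, Sh P (t, y, 1))
    (hcol : (t - p.1) * (q.2 - p.2) - (s - p.2) * (q.1 - p.1) = 0)
    (hne : p.1 ≠ q.1) (hlt : lam P (t, s, 1) ≠ 0) : Sh P (t, s, 1) := by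
  obtain ⟨y0, hy0⟩ := ht
  refine master P hp hq hy0 (sh_Qy P) (k := q.1 - p.1) ?_ (sub_ne_zero.2 (fun h => hne h.symm)) hlt
  simp only [cr, Prod.ext_iff, Prod.smul_def, smul_eq_mul]
  refine ⟨by ring, by linear_combination hcol, by ring⟩

/-- Intersect the line through two derived points with the main diagonal. -/
lemma cut_diag (P : Params) {p q : ℚ × ℚ} {t : ℚ}
    (hp : Sh P (p.1, p.2, 1)) (hq : Sh P (q.1, q.2, 1))
    (hcol : (t - p.1) * (q.2 - p.2) - (t - p.2) * (q.1 - p.1) = 0)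
    (hne : (p.2 - q.2) + (q.1 - p.1) ≠ 0) (hlt : lam P (t, t, 1) ≠ 0) : Sh P (t, t, 1) := by
  refine master P hp hq (sh_E0 P) (sh_Ed P) (k := (p.2 - q.2) + (q.1 - p.1)) ?_ hne hlt
  simp only [cr, Prod.ext_iff, Prod.smul_def, smul_eq_mul]
  refine ⟨by linear_combination hcol, by linear_combination hcol, by ring⟩

/-- Rectangle completion. -/
lemma rect (P : Params) {x y x' y' : ℚ} (h1 : Sh P (x, y', 1)) (h2 : Sh P (x', y, 1))
    (hl : lam P (x, y, 1) ≠ 0) : Sh P (x, y, 1) := by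
  refine master P h1 (sh_Qy P) h2 (sh_Px P) (k := -1) ?_ (by norm_num) hl
  simp only [cr, Prod.ext_iff, Prod.smul_def, smul_eq_mul]
  refine ⟨by ring, by ring, by ring⟩

def XS (P : Params) (x : ℚ) : Prop := ∃ y, Sh P (x, y, 1)
def YS (P : Params) (y : ℚ) : Prop := ∃ x, Sh P (x, y, 1)

lemma row_unique (P : Params) {x x' r : ℚ} (h : lam P (x, r, 1) = 0)
    (h' : lam P (x', r, 1) = 0) : x = x' := by
  simp only [lam_pt] at h h'
  have : P.u * (x - x') = 0 := by linarith
  rcases mul_eq_zero.1 this with h'' | h''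
  · exact absurd h'' P.hu
  · linarith

lemma col_unique (P : Params) {y y' t : ℚ} (h : lam P (t, y, 1) = 0)
    (h' : lam P (t, y', 1) = 0) : y = y' := by
  simp only [lam_pt] at h h'
  have : P.v * (y - y') = 0 := by linarith
  rcases mul_eq_zero.1 this with h'' | h''
  · exact absurd h'' P.hv
  · linarith

def Params.swap (P : Params) : Params :=
  ⟨P.v, P.u, P.hv, P.hu, P.hv1, P.hu1, fun h => P.hw (by linarith), fun h => P.hm (by linarith)⟩

lemma sh_swap (P : Params) {e : ℚ × ℚ × ℚ} (h : Sh P e) :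
    Sh P.swap (e.2.1, e.1, e.2.2) := by
  obtain ⟨hl, hd⟩ := h
  have hls : lam P.swap (e.2.1, e.1, e.2.2) = lam P e := by
    show P.v * e.2.1 + P.u * e.1 + e.2.2 = P.u * e.1 + P.v * e.2.1 + e.2.2
    ring
  refine ⟨by rw [hls]; exact hl, ?_⟩
  have hG := sderiv_map 0 1 1 0 0 0 (by norm_num) (fun w => (w.2, w.1))
    (fun w => by simp) hd
  have hsw : ∀ p : ℚ × ℚ, (((emb p).2), (emb p).1) = emb (p.2, p.1) := fun p => rfl
  have himg : (fun w : ℝ × ℝ => (w.2, w.1)) '' sbase P = sbase P.swap := by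
    unfold sbase
    rw [Set.image_insert_eq, Set.image_insert_eq, Set.image_insert_eq, Set.image_singleton]
    show ({((emb ((0:ℚ),(0:ℚ))).2, (emb ((0:ℚ),(0:ℚ))).1),
      ((emb ((1:ℚ),(0:ℚ))).2, (emb ((1:ℚ),(0:ℚ))).1),
      ((emb ((0:ℚ),(1:ℚ))).2, (emb ((0:ℚ),(1:ℚ))).1),
      ((emb (dpt P)).2, (emb (dpt P)).1)} : Set (ℝ × ℝ)) = _
    rw [hsw, hsw, hsw, hsw]
    have e4 : emb ((dpt P).2, (dpt P).1) = emb (dpt P.swap) := by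
      apply congrArg
      apply Prod.ext
      · show (P.v + 1) / (P.u + P.v + 1) = (P.v + 1) / (P.v + P.u + 1)
        rw [show P.u + P.v + 1 = P.v + P.u + 1 from by ring]
      · show (P.u + 1) / (P.u + P.v + 1) = (P.u + 1) / (P.v + P.u + 1)
        rw [show P.u + P.v + 1 = P.v + P.u + 1 from by ring]
    rw [e4]
    rw [Set.insert_comm (emb ((0:ℚ),(1:ℚ))) (emb ((1:ℚ),(0:ℚ)))]
  have hpt : (fun w : ℝ × ℝ => (w.2, w.1)) (emb (psi P e)) = emb (psi P.swap (e.2.1, e.1, e.2.2)) := by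
    show ((emb (psi P e)).2, (emb (psi P e)).1) = _
    rw [hsw]
    apply congrArg
    apply Prod.ext
    · show (P.v + 1) * e.2.1 / lam P e = (P.swap.u + 1) * e.2.1 / lam P.swap (e.2.1, e.1, e.2.2)
      rw [show lam P.swap (e.2.1, e.1, e.2.2) = lam P e from by
        show P.v * e.2.1 + P.u * e.1 + e.2.2 = P.u * e.1 + P.v * e.2.1 + e.2.2; ring]
      rfl
    · show (P.u + 1) * e.1 / lam P e = (P.swap.v + 1) * e.1 / lam P.swap (e.2.1, e.1, e.2.2)
      rw [show lam P.swap (e.2.1, e.1, e.2.2) = lam P e from by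
        show P.v * e.2.1 + P.u * e.1 + e.2.2 = P.u * e.1 + P.v * e.2.1 + e.2.2; ring]
      rfl
  rw [himg] at hG
  rw [← hpt]
  exact hG

lemma YS_iff (P : Params) (r : ℚ) : YS P r ↔ XS P.swap r := by
  constructor
  · rintro ⟨x, hx⟩
    exact ⟨x, sh_swap P hx⟩
  · rintro ⟨y, hy⟩
    exact ⟨y, sh_swap P.swap hy⟩

lemma XS_iff (P : Params) (r : ℚ) : XS P r ↔ YS P.swap r := by
  constructor
  · rintro ⟨y, hy⟩
    exact ⟨y, sh_swap P hy⟩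
  · rintro ⟨x, hx⟩
    exact ⟨x, sh_swap P.swap hx⟩

end SGAux

namespace SGAux

lemma shxy (P : Params) {x y : ℚ} (hx : XS P x) (hy : YS P y)
    (h : lam P (x, y, 1) ≠ 0) : Sh P (x, y, 1) := by
  obtain ⟨y', h1⟩ := hx
  obtain ⟨x', h2⟩ := hy
  exact rect P h1 h2 h

lemma xs0 (P : Params) : XS P 0 := ⟨0, sh_E0 P⟩
lemma xs1 (P : Params) : XS P 1 := ⟨0, sh_Ex P⟩
lemma xshalf (P : Params) : XS P (1/2) := ⟨1/2, sh_halfM P⟩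
lemma ys0 (P : Params) : YS P 0 := ⟨0, sh_E0 P⟩
lemma ys1 (P : Params) : YS P 1 := ⟨0, sh_Ey P⟩
lemma yshalf (P : Params) : YS P (1/2) := ⟨1/2, sh_halfM P⟩

lemma xs_quarter (P : Params) : XS P (1/4) := by
  by_cases hq : lam P (1/4, 1/2, 1) = 0
  · -- target row 1/2 blocked; go to (1/4, 1/4) via the diagonal
    have h1 : lam P (0, 1/2, 1) ≠ 0 := by
      rw [lam_pt] at hq ⊢
      intro h; exact P.hu (by linarith)
    have h2 : lam P (1/2, 0, 1) ≠ 0 := by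
      rw [lam_pt] at hq ⊢
      intro h; exact P.hv1 (by linarith)
    have s1 : Sh P (0, 1/2, 1) := shxy P (xs0 P) (yshalf P) h1
    have s2 : Sh P (1/2, 0, 1) := shxy P (xshalf P) (ys0 P) h2
    have hlt : lam P (1/4, 1/4, 1) ≠ 0 := by
      rw [lam_pt] at hq ⊢
      intro h; exact P.hv (by linarith)
    exact ⟨1/4, cut_diag P (p := (0, 1/2)) (q := (1/2, 0)) s1 s2 (by norm_num)
      (by norm_num) hlt⟩
  · by_cases hb : lam P (1/2, 1, 1) = 0
    · -- alternative line through (0,1) and (1/2,0)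
      have h2 : lam P (1/2, 0, 1) ≠ 0 := by
        rw [lam_pt] at hb ⊢
        intro h; exact P.hv (by linarith)
      have s2 : Sh P (1/2, 0, 1) := shxy P (xshalf P) (ys0 P) h2
      exact ⟨1/2, cut_row P (p := (0, 1)) (q := (1/2, 0)) (sh_Ey P) s2
        ⟨1/2, sh_halfM P⟩ (by norm_num) (by norm_num) hq⟩
    · have s2 : Sh P (1/2, 1, 1) := shxy P (xshalf P) (ys1 P) hb
      exact ⟨1/2, cut_row P (p := (0, 0)) (q := (1/2, 1)) (sh_E0 P) s2
        ⟨1/2, sh_halfM P⟩ (by norm_num) (by norm_num) hq⟩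

lemma ys_quarter (P : Params) : YS P (1/4) := (YS_iff P _).2 (xs_quarter P.swap)

lemma xs_threequarter (P : Params) : XS P (3/4) := by
  by_cases h12 : lam P (1/2, 0, 1) = 0
  · -- u = -2 case
    have h1 : lam P (1/2, 1, 1) ≠ 0 := by
      rw [lam_pt] at h12 ⊢
      intro h; exact P.hv (by linarith)
    have s1 : Sh P (1/2, 1, 1) := shxy P (xshalf P) (ys1 P) h1
    have hlt : lam P (3/4, 1/2, 1) ≠ 0 := by
      rw [lam_pt] at h12 ⊢
      intro h; exact P.hw (by linarith)
    exact ⟨1/2, cut_row P (p := (1, 0)) (q := (1/2, 1)) (sh_Ex P) s1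
      ⟨1/2, sh_halfM P⟩ (by norm_num) (by norm_num) hlt⟩
  · have s2 : Sh P (1/2, 0, 1) := shxy P (xshalf P) (ys0 P) h12
    by_cases hT : lam P (3/4, 1/2, 1) = 0
    · -- blocked target; use row 1/4 via (1,0) and M
      have hlt : lam P (3/4, 1/4, 1) ≠ 0 := by
        rw [lam_pt] at hT ⊢
        intro h; exact P.hv (by linarith)
      exact ⟨1/4, cut_row P (p := (1, 0)) (q := (1/2, 1/2)) (sh_Ex P) (sh_halfM P)
        (ys_quarter P) (by norm_num) (by norm_num) hlt⟩
    · exact ⟨1/2, cut_row P (p := (1, 1)) (q := (1/2, 0)) (sh_Ed P) s2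
        ⟨1/2, sh_halfM P⟩ (by norm_num) (by norm_num) hT⟩

lemma ys_threequarter (P : Params) : YS P (3/4) := (YS_iff P _).2 (xs_threequarter P.swap)

lemma xs2 (P : Params) : XS P 2 := by
  by_cases hα : lam P (1, 1/2, 1) = 0
  · -- (1,1/2) on the bad line
    have h1 : lam P (0, 1/2, 1) ≠ 0 := by
      rw [lam_pt] at hα ⊢
      intro h; exact P.hu (by linarith)
    have s1 : Sh P (0, 1/2, 1) := shxy P (xs0 P) (yshalf P) h1
    have h2 : lam P (1/2, 1/4, 1) ≠ 0 := by
      rw [lam_pt] at hα ⊢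
      intro h; linarith
    have s2 : Sh P (1/2, 1/4, 1) :=
      cut_col P (p := (1, 0)) (q := (0, 1/2)) (sh_Ex P) s1 (xshalf P)
        (by norm_num) (by norm_num) h2
    have hlt : lam P (2, 1, 1) ≠ 0 := by
      rw [lam_pt] at hα ⊢
      intro h; linarith
    exact ⟨1, cut_row P (p := (0, 0)) (q := (1/2, 1/4)) (sh_E0 P) s2
      (ys1 P) (by norm_num) (by norm_num) hlt⟩
  · have s1 : Sh P (1, 1/2, 1) := shxy P (xs1 P) (yshalf P) hα
    by_cases hβ : lam P (2, 1, 1) = 0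
    · have hlt : lam P (2, 0, 1) ≠ 0 := by
        rw [lam_pt] at hβ ⊢
        intro h; exact P.hv (by linarith)
      exact ⟨0, cut_row P (p := (0, 1)) (q := (1, 1/2)) (sh_Ey P) s1
        (ys0 P) (by norm_num) (by norm_num) hlt⟩
    · exact ⟨1, cut_row P (p := (0, 0)) (q := (1, 1/2)) (sh_E0 P) s1
        (ys1 P) (by norm_num) (by norm_num) hβ⟩

lemma ys2 (P : Params) : YS P 2 := (YS_iff P _).2 (xs2 P.swap)

end SGAux

namespace SGAux

lemma lam_ne_row (P : Params) {x x' r : ℚ} (h : lam P (x, r, 1) = 0) (hne : x' ≠ x) :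
    lam P (x', r, 1) ≠ 0 := fun h' => hne (row_unique P h' h)

lemma lam_ne_col (P : Params) {y y' t : ℚ} (h : lam P (t, y, 1) = 0) (hne : y' ≠ y) :
    lam P (t, y', 1) ≠ 0 := fun h' => hne (col_unique P h' h)

lemma op_mid (P : Params) {a b : ℚ} (ha : XS P a) (hb : XS P b) : XS P ((a + b) / 2) := by
  by_cases hab : a = b
  · rw [hab, show (b + b) / 2 = b from by ring]; exact hb
  by_cases hT : lam P ((a + b) / 2, 1/2, 1) = 0
  · -- go to row 1/4
    have hlt : lam P ((a + b) / 2, 1/4, 1) ≠ 0 := by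
      rw [lam_pt] at hT ⊢
      intro h; exact P.hv (by linarith)
    by_cases h1 : lam P (a, 0, 1) = 0
    · have ha2 : lam P (a, 1/2, 1) ≠ 0 := lam_ne_col P h1 (by norm_num)
      have hb2 : lam P (b, 0, 1) ≠ 0 := lam_ne_row P h1 (fun h => hab h.symm)
      exact ⟨1/4, cut_row P (p := (a, 1/2)) (q := (b, 0))
        (shxy P ha (yshalf P) ha2) (shxy P hb (ys0 P) hb2) (ys_quarter P)
        (by ring) (by norm_num) hlt⟩
    · by_cases h2 : lam P (b, 1/2, 1) = 0
      · have ha2 : lam P (a, 1/2, 1) ≠ 0 := lam_ne_row P h2 hab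
        have hb2 : lam P (b, 0, 1) ≠ 0 := lam_ne_col P h2 (by norm_num)
        exact ⟨1/4, cut_row P (p := (a, 1/2)) (q := (b, 0))
          (shxy P ha (yshalf P) ha2) (shxy P hb (ys0 P) hb2) (ys_quarter P)
          (by ring) (by norm_num) hlt⟩
      · exact ⟨1/4, cut_row P (p := (a, 0)) (q := (b, 1/2))
          (shxy P ha (ys0 P) h1) (shxy P hb (yshalf P) h2) (ys_quarter P)
          (by ring) (by norm_num) hlt⟩
  · -- row 1/2 target fine, use rows 0 and 1
    by_cases h1 : lam P (a, 0, 1) = 0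
    · have ha2 : lam P (a, 1, 1) ≠ 0 := lam_ne_col P h1 (by norm_num)
      have hb2 : lam P (b, 0, 1) ≠ 0 := lam_ne_row P h1 (fun h => hab h.symm)
      exact ⟨1/2, cut_row P (p := (a, 1)) (q := (b, 0))
        (shxy P ha (ys1 P) ha2) (shxy P hb (ys0 P) hb2) ⟨1/2, sh_halfM P⟩
        (by ring) (by norm_num) hT⟩
    · by_cases h2 : lam P (b, 1, 1) = 0
      · have ha2 : lam P (a, 1, 1) ≠ 0 := lam_ne_row P h2 hab
        have hb2 : lam P (b, 0, 1) ≠ 0 := lam_ne_col P h2 (by norm_num)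
        exact ⟨1/2, cut_row P (p := (a, 1)) (q := (b, 0))
          (shxy P ha (ys1 P) ha2) (shxy P hb (ys0 P) hb2) ⟨1/2, sh_halfM P⟩
          (by ring) (by norm_num) hT⟩
      · exact ⟨1/2, cut_row P (p := (a, 0)) (q := (b, 1))
          (shxy P ha (ys0 P) h1) (shxy P hb (ys1 P) h2) ⟨1/2, sh_halfM P⟩
          (by ring) (by norm_num) hT⟩

lemma op_double (P : Params) {a : ℚ} (ha : XS P a) : XS P (2 * a) := by
  by_cases ha0 : a = 0
  · rw [ha0]; norm_num; exact xs0 P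
  have hhalf : XS P (a / 2) := by
    have := op_mid P (xs0 P) ha
    rwa [show (0 + a) / 2 = a / 2 from by ring] at this
  by_cases hT : lam P (2 * a, 1, 1) = 0
  · -- pinned: 2ua + v + 1 = 0
    by_cases h02 : lam P (0, 2, 1) = 0
    · -- v = -1/2, ua = -1/4 : use line (0,0)-(a,1), target (2a, 2)
      have hA1 : lam P (a, 1, 1) ≠ 0 := by
        rw [lam_pt] at hT h02 ⊢
        intro h; linarith
      have hlt : lam P (2 * a, 2, 1) ≠ 0 := by
        rw [lam_pt] at hT h02 ⊢
        intro h; linarith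
      exact ⟨2, cut_row P (p := (0, 0)) (q := (a, 1)) (sh_E0 P)
        (shxy P ha (ys1 P) hA1) (ys2 P) (by ring) (by norm_num) hlt⟩
    · -- use line (0,2)-(a,1), target (2a, 0)
      have hA1 : lam P (a, 1, 1) ≠ 0 := by
        rw [lam_pt] at hT ⊢
        intro h
        have : P.u * a = 0 := by linarith
        rcases mul_eq_zero.1 this with h' | h'
        · exact P.hu h'
        · exact ha0 h'
      have hlt : lam P (2 * a, 0, 1) ≠ 0 := by
        rw [lam_pt] at hT ⊢
        intro h; exact P.hv (by linarith)
      exact ⟨0, cut_row P (p := (0, 2)) (q := (a, 1))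
        (shxy P (xs0 P) (ys2 P) h02) (shxy P ha (ys1 P) hA1) (ys0 P)
        (by ring) (by norm_num) hlt⟩
  · by_cases h1 : lam P (a, 1/2, 1) = 0
    · have h2 : lam P (a / 2, 1/4, 1) ≠ 0 := by
        rw [lam_pt] at h1 ⊢
        intro h; linarith
      exact ⟨1, cut_row P (p := (0, 0)) (q := (a / 2, 1/4)) (sh_E0 P)
        (shxy P hhalf (ys_quarter P) h2) (ys1 P) (by ring) (by norm_num) hT⟩
    · exact ⟨1, cut_row P (p := (0, 0)) (q := (a, 1/2)) (sh_E0 P)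
        (shxy P ha (yshalf P) h1) (ys1 P) (by ring) (by norm_num) hT⟩

lemma op_add (P : Params) {a b : ℚ} (ha : XS P a) (hb : XS P b) : XS P (a + b) := by
  have := op_double P (op_mid P ha hb)
  rwa [show 2 * ((a + b) / 2) = a + b from by ring] at this

lemma op_comp (P : Params) {a : ℚ} (ha : XS P a) : XS P (1 - a) := by
  by_cases hab : a = 1/2
  · rw [hab]; norm_num; exact xshalf P
  by_cases h1 : lam P (a, 0, 1) = 0
  · have ha2 : lam P (a, 1, 1) ≠ 0 := lam_ne_col P h1 (by norm_num)
    have hb2 : lam P (1 - a, 0, 1) ≠ 0 := lam_ne_row P h1 (by intro h; apply hab; linarith)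
    exact ⟨0, cut_row P (p := (a, 1)) (q := (1/2, 1/2))
      (shxy P ha (ys1 P) ha2) (sh_halfM P) (ys0 P) (by ring) (by norm_num) hb2⟩
  · by_cases h2 : lam P (1 - a, 1, 1) = 0
    · have ha2 : lam P (a, 1, 1) ≠ 0 := lam_ne_row P h2 (by intro h; apply hab; linarith)
      have hb2 : lam P (1 - a, 0, 1) ≠ 0 := lam_ne_col P h2 (by norm_num)
      exact ⟨0, cut_row P (p := (a, 1)) (q := (1/2, 1/2))
        (shxy P ha (ys1 P) ha2) (sh_halfM P) (ys0 P) (by ring) (by norm_num) hb2⟩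
    · exact ⟨1, cut_row P (p := (a, 0)) (q := (1/2, 1/2))
        (shxy P ha (ys0 P) h1) (sh_halfM P) (ys1 P) (by ring) (by norm_num) h2⟩

lemma op_midY (P : Params) {a b : ℚ} (ha : YS P a) (hb : YS P b) : YS P ((a + b) / 2) :=
  (YS_iff P _).2 (op_mid P.swap ((YS_iff P _).1 ha) ((YS_iff P _).1 hb))

lemma op_inv (P : Params) {g : ℚ} (hg : YS P g) (hg0 : g ≠ 0) : XS P (1 / g) := by
  have hyhalfg : YS P (g / 2) := by
    have := op_midY P (ys0 P) hg
    rwa [show (0 + g) / 2 = g / 2 from by ring] at this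
  have main : ∀ w : ℚ × ℚ, Sh P (w.1, w.2, 1) → w.2 = g * w.1 → w.1 ≠ 0 → XS P (1 / g) := by
    intro w hw hline hw0
    have hgw : g * w.1 ≠ 0 := mul_ne_zero hg0 hw0
    by_cases hT : lam P (1 / g, 1, 1) = 0
    · -- target (2/g, 2), then halve
      have hlt : lam P (2 / g, 2, 1) ≠ 0 := by
        rw [lam_pt] at hT ⊢
        intro h
        have e2 : P.u * (2 / g) = 2 * (P.u * (1 / g)) := by ring
        rw [e2] at h
        linarith
      have h2g : XS P (2 / g) := by
        refine ⟨2, cut_row P (p := (0, 0)) (q := w) (sh_E0 P) hw (ys2 P) ?_ ?_ hlt⟩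
        · show (2 / g - 0) * (w.2 - 0) - (2 - 0) * (w.1 - 0) = 0
          rw [hline]; field_simp; try ring
        · show (0 : ℚ) ≠ w.2
          rw [hline]; exact fun h => hgw h.symm
      have := op_mid P (xs0 P) h2g
      rwa [show (0 + 2 / g) / 2 = 1 / g from by ring] at this
    · refine ⟨1, cut_row P (p := (0, 0)) (q := w) (sh_E0 P) hw (ys1 P) ?_ ?_ hT⟩
      · show (1 / g - 0) * (w.2 - 0) - (1 - 0) * (w.1 - 0) = 0
        rw [hline]; field_simp; try ring
      · show (0 : ℚ) ≠ w.2
        rw [hline]; exact fun h => hgw h.symm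
  by_cases h1 : lam P (1, g, 1) = 0
  · have h2 : lam P (1/2, g / 2, 1) ≠ 0 := by
      rw [lam_pt] at h1 ⊢
      intro h
      have e2 : P.v * (g / 2) = (P.v * g) / 2 := by ring
      rw [e2] at h
      linarith
    exact main (1/2, g / 2) (shxy P (xshalf P) hyhalfg h2) (by push_cast; ring) (by norm_num)
  · exact main (1, g) (shxy P (xs1 P) hg h1) (by push_cast; ring) (by norm_num)

lemma xs_natmul (P : Params) {x : ℚ} (hx : XS P x) : ∀ n : ℕ, XS P (n * x) := by
  intro n
  induction n with
  | zero => simpa using xs0 P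
  | succ k ih =>
    have h := op_add P ih hx
    have e : (k : ℚ) * x + x = ((k + 1 : ℕ) : ℚ) * x := by push_cast; ring
    rwa [e] at h

lemma xs_neg (P : Params) {x : ℚ} (hx : XS P x) : XS P (-x) := by
  have h1 : XS P (x + 1) := op_add P hx (xs1 P)
  have := op_comp P h1
  rwa [show 1 - (x + 1) = -x from by ring] at this

lemma xs_rat (P : Params) (q : ℚ) : XS P q := by
  have hd : YS P ((q.den : ℚ)) := by
    refine (YS_iff P _).2 ?_
    have := xs_natmul P.swap (xs1 P.swap) q.den
    rwa [mul_one] at this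
  have hdne : ((q.den : ℚ)) ≠ 0 := Nat.cast_ne_zero.2 q.den_pos.ne'
  have hinv := op_inv P hd hdne
  have habs := xs_natmul P hinv q.num.natAbs
  rcases le_or_gt 0 q.num with hn | hn
  · have hcast : ((q.num.natAbs : ℚ)) = ((q.num : ℤ) : ℚ) := by
      rw [Nat.cast_natAbs, abs_of_nonneg hn]
    rw [hcast] at habs
    rwa [mul_one_div, Rat.num_div_den] at habs
  · have hcast : ((q.num.natAbs : ℚ)) = -((q.num : ℤ) : ℚ) := by
      rw [Nat.cast_natAbs, abs_of_neg hn]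
      push_cast
      ring
    rw [hcast] at habs
    have h2 := xs_neg P habs
    rwa [show -(-((q.num : ℚ)) * (1 / (q.den : ℚ))) = (q.num : ℚ) * (1 / (q.den : ℚ)) from by
      ring, mul_one_div, Rat.num_div_den] at h2

lemma ys_rat (P : Params) (q : ℚ) : YS P q := (YS_iff P _).2 (xs_rat P.swap q)

/-- Every good point of the standard frame is derivable. -/
lemma sh_all (P : Params) (x y : ℚ) (h : lam P (x, y, 1) ≠ 0) : Sh P (x, y, 1) :=
  shxy P (xs_rat P x) (ys_rat P y) h

end SGAux

namespace SGAux

def e3fun (P : Params) (q : ℚ × ℚ) : ℚ :=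
  (P.u + 1) * (P.v + 1) - P.u * (P.v + 1) * q.1 - P.v * (P.u + 1) * q.2

lemma div_helper (a b c q : ℚ) (hc : c ≠ 0) (ha : a ≠ 0) (hb : b ≠ 0) :
    a * (b * q / c) / (a * b / c) = q := by
  field_simp

lemma div_helper' (a b c q : ℚ) (hc : c ≠ 0) (ha : a ≠ 0) (hb : b ≠ 0) :
    b * (a * q / c) / (a * b / c) = q := by
  field_simp

lemma norm_good (P : Params) (q : ℚ × ℚ) (he3 : e3fun P q ≠ 0) :
    SDeriv (sbase P) (emb q) := by
  set x : ℚ := (P.v + 1) * q.1 / e3fun P q with hx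
  set y : ℚ := (P.u + 1) * q.2 / e3fun P q with hy
  have hlam : lam P (x, y, 1) = (P.u + 1) * (P.v + 1) / e3fun P q := by
    rw [lam_pt, hx, hy]
    field_simp
    unfold e3fun
    ring
  have hl : lam P (x, y, 1) ≠ 0 := by
    rw [hlam]
    exact div_ne_zero (mul_ne_zero P.hu1 P.hv1) he3
  have hsh := sh_all P x y hl
  have hpsi : psi P (x, y, 1) = q := by
    unfold psi
    rw [hlam]
    apply Prod.ext
    · show (P.u + 1) * x / ((P.u + 1) * (P.v + 1) / e3fun P q) = q.1
      rw [hx]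
      exact div_helper (P.u + 1) (P.v + 1) (e3fun P q) q.1 he3 P.hu1 P.hv1
    · show (P.v + 1) * y / ((P.u + 1) * (P.v + 1) / e3fun P q) = q.2
      rw [hy]
      exact div_helper' (P.u + 1) (P.v + 1) (e3fun P q) q.2 he3 P.hu1 P.hv1
  rw [show q = psi P (x, y, 1) from hpsi.symm]
  exact hsh.2

lemma psi_Px (P : Params) : psi P (1, 0, 0) = ((P.u + 1) / P.u, 0) := by
  unfold psi
  have h : lam P (1, 0, 0) = P.u := by show P.u * 1 + P.v * 0 + 0 = P.u; ring
  rw [h]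
  apply Prod.ext
  · show (P.u + 1) * 1 / P.u = (P.u + 1) / P.u
    rw [mul_one]
  · show (P.v + 1) * 0 / P.u = 0
    simp

lemma psi_Qy (P : Params) : psi P (0, 1, 0) = (0, (P.v + 1) / P.v) := by
  unfold psi
  have h : lam P (0, 1, 0) = P.v := by show P.u * 0 + P.v * 1 + 0 = P.v; ring
  rw [h]
  apply Prod.ext
  · show (P.u + 1) * 0 / P.v = 0
    simp
  · show (P.v + 1) * 1 / P.v = (P.v + 1) / P.v
    rw [mul_one]

lemma mem_infline_iff (P : Params) (z : ℚ × ℚ) :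
    emb z ∈ lineThrough (emb ((P.u + 1) / P.u, 0)) (emb (0, (P.v + 1) / P.v)) ↔
      e3fun P z = 0 := by
  have hne : (((P.u + 1) / P.u, 0) : ℚ × ℚ) ≠ (0, (P.v + 1) / P.v) := by
    intro h
    have h1 : (P.u + 1) / P.u = 0 := congrArg Prod.fst h
    exact P.hu1 ((div_eq_zero_iff.1 h1).resolve_right P.hu)
  rw [qmem_iff hne]
  unfold qcross e3fun
  simp only [Prod.fst_sub, Prod.snd_sub]
  constructor
  · intro h
    have h2 : (z.1 - (P.u + 1) / P.u) * ((P.v + 1) / P.v - 0) - (z.2 - 0) * (0 - (P.u + 1) / P.u)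
        = -((P.u + 1) * (P.v + 1) - P.u * (P.v + 1) * z.1 - P.v * (P.u + 1) * z.2) / (P.u * P.v) := by
      field_simp [P.hu, P.hv]
      ring
    rw [h2] at h
    have h3 := (div_eq_zero_iff.1 h).resolve_right (mul_ne_zero P.hu P.hv)
    linarith [neg_eq_zero.1 h3]
  · intro h
    have h2 : (z.1 - (P.u + 1) / P.u) * ((P.v + 1) / P.v - 0) - (z.2 - 0) * (0 - (P.u + 1) / P.u)
        = -((P.u + 1) * (P.v + 1) - P.u * (P.v + 1) * z.1 - P.v * (P.u + 1) * z.2) / (P.u * P.v) := by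
      field_simp [P.hu, P.hv]
      ring
    rw [h2, h]
    simp

/-- Every rational point is derivable in the normalized frame. -/
lemma norm_main (P : Params) (q : ℚ × ℚ) : SDeriv (sbase P) (emb q) := by
  by_cases he3 : e3fun P q ≠ 0
  · exact norm_good P q he3
  push_neg at he3
  -- q lies on the image of the line at infinity; cut it with a horizontal line
  set w1 : ℚ × ℚ := (q.1 + 1, q.2) with hw1
  set w2 : ℚ × ℚ := (q.1 + 2, q.2) with hw2
  have he31 : e3fun P w1 ≠ 0 := by
    unfold e3fun at he3 ⊢
    rw [hw1]
    intro h
    have : P.u * (P.v + 1) = 0 := by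
      simp only [Prod.fst, Prod.snd] at h ⊢
      linarith
    exact (mul_ne_zero P.hu P.hv1) this
  have he32 : e3fun P w2 ≠ 0 := by
    unfold e3fun at he3 ⊢
    rw [hw2]
    intro h
    have : P.u * (P.v + 1) = 0 := by
      have h2 : (2 : ℚ) * (P.u * (P.v + 1)) = 0 := by
        simp only [Prod.fst, Prod.snd] at h ⊢
        linarith
      linarith
    exact (mul_ne_zero P.hu P.hv1) this
  have dPx := (sh_Px P).2
  have dQy := (sh_Qy P).2
  rw [psi_Px P] at dPx
  rw [psi_Qy P] at dQy
  have dw1 := norm_good P w1 he31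
  have dw2 := norm_good P w2 he32
  have hPQne : emb ((P.u + 1) / P.u, 0) ≠ emb (0, (P.v + 1) / P.v) := by
    intro h
    have h1 := emb_inj h
    have h2 : (P.u + 1) / P.u = 0 := congrArg Prod.fst h1
    exact P.hu1 ((div_eq_zero_iff.1 h2).resolve_right P.hu)
  have hw12 : emb w1 ≠ emb w2 := by
    intro h
    have h1 := emb_inj h
    have h2 : q.1 + 1 = q.1 + 2 := congrArg Prod.fst h1
    linarith
  refine SDeriv.inter dPx dQy dw1 dw2 hPQne hw12 ?_ ?_ ?_
  · intro hEq
    have : emb w1 ∈ lineThrough (emb ((P.u + 1) / P.u, 0)) (emb (0, (P.v + 1) / P.v)) := by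
      rw [hEq]
      exact left_mem_lineThrough _ _
    exact he31 ((mem_infline_iff P w1).1 this)
  · exact (mem_infline_iff P q).2 he3
  · rw [qmem_iff (fun h => hw12 (congrArg emb h))]
    unfold qcross
    rw [hw1, hw2]
    simp only [Prod.fst_sub, Prod.snd_sub]
    simp
end SGAux

namespace SGAux

/-- All rational points are derivable from a normalized quadruple in general position. -/
lemma norm_full (d1 d2 : ℚ) (h10 : d1 ≠ 0) (h11 : d1 ≠ 1) (h20 : d2 ≠ 0) (h21 : d2 ≠ 1)
    (hs0 : d1 + d2 ≠ 0) (hs1 : d1 + d2 ≠ 1) (q : ℚ × ℚ) :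
    SDeriv {emb (0, 0), emb (1, 0), emb (0, 1), emb (d1, d2)} (emb q) := by
  have hden : d1 + d2 - 1 ≠ 0 := fun h => hs1 (by linarith)
  set u : ℚ := (1 - d2) / (d1 + d2 - 1) with hu_def
  set v : ℚ := (1 - d1) / (d1 + d2 - 1) with hv_def
  have hu : u ≠ 0 := div_ne_zero (fun h => h21 (by linarith)) hden
  have hv : v ≠ 0 := div_ne_zero (fun h => h11 (by linarith)) hden
  have hu1e : u + 1 = d1 / (d1 + d2 - 1) := by
    rw [hu_def]; field_simp; try ring
  have hv1e : v + 1 = d2 / (d1 + d2 - 1) := by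
    rw [hv_def]; field_simp; try ring
  have hwe : u + v + 1 = 1 / (d1 + d2 - 1) := by
    rw [hu_def, hv_def]; field_simp; try ring
  have hme : u + v + 2 = (d1 + d2) / (d1 + d2 - 1) := by
    rw [hu_def, hv_def]; field_simp; try ring
  have hu1 : u + 1 ≠ 0 := by rw [hu1e]; exact div_ne_zero h10 hden
  have hv1 : v + 1 ≠ 0 := by rw [hv1e]; exact div_ne_zero h20 hden
  have hw : u + v + 1 ≠ 0 := by rw [hwe]; exact div_ne_zero one_ne_zero hden
  have hm : u + v + 2 ≠ 0 := by rw [hme]; exact div_ne_zero hs0 hden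
  set P : Params := ⟨u, v, hu, hv, hu1, hv1, hw, hm⟩ with hP
  have hdpt : dpt P = (d1, d2) := by
    unfold dpt
    apply Prod.ext
    · show (u + 1) / (u + v + 1) = d1
      rw [hu1e, hwe]
      field_simp
    · show (v + 1) / (u + v + 1) = d2
      rw [hv1e, hwe]
      field_simp
  have hbase : sbase P = {emb (0, 0), emb (1, 0), emb (0, 1), emb (d1, d2)} := by
    unfold sbase
    rw [hdpt]
  rw [← hbase]
  exact norm_main P q

lemma collinear_of_qcross {a b c : ℚ × ℚ} (h : qcross (b - a) (c - a) = 0) :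
    Collinear ℝ ({emb a, emb b, emb c} : Set (ℝ × ℝ)) := by
  by_cases hab : a = b
  · subst hab
    have hset : ({emb a, emb a, emb c} : Set (ℝ × ℝ)) = {emb a, emb c} := by
      rw [Set.insert_idem]
    rw [hset]
    exact collinear_pair ℝ _ _
  · have hmem : emb c ∈ lineThrough (emb a) (emb b) := by
      rw [qmem_iff hab]
      unfold qcross at h ⊢
      simp only [Prod.fst_sub, Prod.snd_sub] at h ⊢
      linarith
    obtain ⟨t, ht⟩ := hmem
    apply (collinear_iff_of_mem (Set.mem_insert (emb a) _)).2
    refine ⟨emb b - emb a, ?_⟩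
    intro p hp
    rcases hp with h' | h' | h'
    · exact ⟨0, by rw [h']; simp⟩
    · refine ⟨1, ?_⟩
      rw [h', vadd_eq_add, one_smul]
      abel
    · rw [Set.mem_singleton_iff] at h'
      refine ⟨t, ?_⟩
      rw [h', vadd_eq_add, ht]
      abel

end SGAux


end

open SGAux

theorem rational_points_derivable (A B C D : ℚ × ℚ)
    (hdist : List.Pairwise (· ≠ ·) [A, B, C, D])
    (hcol : ∀ s : Set (ℝ × ℝ), s ⊆ {emb A, emb B, emb C, emb D} → s.ncard = 3 →
      ¬ Collinear ℝ s)
    (hABCD : ¬ QParallel (B - A) (D - C))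
    (hADBC : ¬ QParallel (D - A) (C - B))
    (hACBD : ¬ QParallel (C - A) (D - B)) :
    Dense {p | SDeriv {emb A, emb B, emb C, emb D} p} ∧
    ∀ p : ℚ × ℚ, SDeriv {emb A, emb B, emb C, emb D} (emb p) := by
  classical
  obtain ⟨h1, h2⟩ := List.pairwise_cons.1 hdist
  obtain ⟨h3, h4⟩ := List.pairwise_cons.1 h2
  obtain ⟨h5, _⟩ := List.pairwise_cons.1 h4
  have hAB : A ≠ B := h1 B (by simp)
  have hAC : A ≠ C := h1 C (by simp)
  have hAD : A ≠ D := h1 D (by simp)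
  have hBC : B ≠ C := h3 C (by simp)
  have hBD : B ≠ D := h3 D (by simp)
  have hCD : C ≠ D := h5 D (by simp)
  have ncol : ∀ a b c : ℚ × ℚ,
      ({emb a, emb b, emb c} : Set (ℝ × ℝ)) ⊆ {emb A, emb B, emb C, emb D} →
      a ≠ b → a ≠ c → b ≠ c → qcross (b - a) (c - a) ≠ 0 := by
    intro a b c hsub hab hac hbc h
    refine hcol _ hsub ?_ (collinear_of_qcross h)
    have hnot : emb a ∉ ({emb b, emb c} : Set (ℝ × ℝ)) := by
      simp only [Set.mem_insert_iff, Set.mem_singleton_iff]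
      push_neg
      exact ⟨fun he => hab (emb_inj he), fun he => hac (emb_inj he)⟩
    rw [Set.ncard_insert_of_notMem hnot, Set.ncard_pair (fun he => hbc (emb_inj he))]
  have subABC : ({emb A, emb B, emb C} : Set (ℝ × ℝ)) ⊆ {emb A, emb B, emb C, emb D} := by
    intro x hx
    simp only [Set.mem_insert_iff, Set.mem_singleton_iff] at hx ⊢
    tauto
  have subACD : ({emb A, emb C, emb D} : Set (ℝ × ℝ)) ⊆ {emb A, emb B, emb C, emb D} := by
    intro x hx
    simp only [Set.mem_insert_iff, Set.mem_singleton_iff] at hx ⊢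
    tauto
  have subABD : ({emb A, emb B, emb D} : Set (ℝ × ℝ)) ⊆ {emb A, emb B, emb C, emb D} := by
    intro x hx
    simp only [Set.mem_insert_iff, Set.mem_singleton_iff] at hx ⊢
    tauto
  have subBCD : ({emb B, emb C, emb D} : Set (ℝ × ℝ)) ⊆ {emb A, emb B, emb C, emb D} := by
    intro x hx
    simp only [Set.mem_insert_iff, Set.mem_singleton_iff] at hx ⊢
    tauto
  set dd : ℚ := (B.1 - A.1) * (C.2 - A.2) - (B.2 - A.2) * (C.1 - A.1) with hdd_def
  have hddne : dd ≠ 0 := by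
    intro h0
    apply ncol A B C subABC hAB hAC hBC
    unfold qcross
    simp only [Prod.fst_sub, Prod.snd_sub]
    linarith [h0]
  have hqACD : qcross (C - A) (D - A) ≠ 0 := ncol A C D subACD hAC hAD hCD
  have hqABD : qcross (B - A) (D - A) ≠ 0 := ncol A B D subABD hAB hAD hBD
  have hqBCD : qcross (C - B) (D - B) ≠ 0 := ncol B C D subBCD hBC hBD hCD
  unfold qcross at hqACD hqABD hqBCD
  simp only [Prod.fst_sub, Prod.snd_sub] at hqACD hqABD hqBCD
  set d1 : ℚ := ((C.2 - A.2) * (D.1 - A.1) - (C.1 - A.1) * (D.2 - A.2)) / dd with hd1_def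
  set d2 : ℚ := ((B.1 - A.1) * (D.2 - A.2) - (B.2 - A.2) * (D.1 - A.1)) / dd with hd2_def
  have h10 : d1 ≠ 0 := by
    rw [hd1_def, div_ne_zero_iff]
    refine ⟨fun h0 => hqACD ?_, hddne⟩
    linarith [h0]
  have h20 : d2 ≠ 0 := by
    rw [hd2_def, div_ne_zero_iff]
    refine ⟨fun h0 => hqABD ?_, hddne⟩
    linarith [h0]
  have h21 : d2 ≠ 1 := by
    intro h0
    rw [hd2_def, div_eq_iff hddne] at h0
    apply hABCD
    unfold QParallel
    simp only [Prod.fst_sub, Prod.snd_sub]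
    linear_combination h0
  have h11 : d1 ≠ 1 := by
    intro h0
    rw [hd1_def, div_eq_iff hddne] at h0
    apply hACBD
    unfold QParallel
    simp only [Prod.fst_sub, Prod.snd_sub]
    linear_combination -h0
  have hs0 : d1 + d2 ≠ 0 := by
    intro h0
    rw [hd1_def, hd2_def, ← add_div, div_eq_zero_iff] at h0
    rcases h0 with h0 | h0
    · apply hADBC
      unfold QParallel
      simp only [Prod.fst_sub, Prod.snd_sub]
      linear_combination h0
    · exact hddne h0
  have hs1 : d1 + d2 ≠ 1 := by
    intro h0
    rw [hd1_def, hd2_def, ← add_div, div_eq_iff hddne] at h0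
    apply hqBCD
    linear_combination -h0
  have key : ∀ q : ℚ × ℚ, SDeriv {emb A, emb B, emb C, emb D} (emb q) := by
    intro q
    set Fq : ℚ × ℚ := (((C.2 - A.2) * (q.1 - A.1) - (C.1 - A.1) * (q.2 - A.2)) / dd,
      ((B.1 - A.1) * (q.2 - A.2) - (B.2 - A.2) * (q.1 - A.1)) / dd) with hFq_def
    have hq := norm_full d1 d2 h10 h11 h20 h21 hs0 hs1 Fq
    set G : ℝ × ℝ → ℝ × ℝ := fun wp =>
      (((B.1 - A.1 : ℚ) : ℝ) * wp.1 + ((C.1 - A.1 : ℚ) : ℝ) * wp.2 + (A.1 : ℝ),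
       ((B.2 - A.2 : ℚ) : ℝ) * wp.1 + ((C.2 - A.2 : ℚ) : ℝ) * wp.2 + (A.2 : ℝ)) with hG_def
    have hdetR : ((B.1 - A.1 : ℚ) : ℝ) * ((C.2 - A.2 : ℚ) : ℝ) -
        ((C.1 - A.1 : ℚ) : ℝ) * ((B.2 - A.2 : ℚ) : ℝ) ≠ 0 := by
      intro h0
      apply hddne
      have : ((dd : ℚ) : ℝ) = 0 := by
        rw [hdd_def]
        push_cast at h0 ⊢
        linarith [h0]
      exact_mod_cast this
    have hmap := sderiv_map _ _ _ _ _ _ hdetR G (fun w => rfl) hq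
    have hcomm : ∀ z : ℚ × ℚ, G (emb z) =
        emb ((B.1 - A.1) * z.1 + (C.1 - A.1) * z.2 + A.1,
             (B.2 - A.2) * z.1 + (C.2 - A.2) * z.2 + A.2) := by
      intro z
      rw [hG_def]
      unfold emb
      apply Prod.ext
      · show ((B.1 - A.1 : ℚ) : ℝ) * (z.1 : ℝ) + ((C.1 - A.1 : ℚ) : ℝ) * (z.2 : ℝ) + (A.1 : ℝ)
          = (((B.1 - A.1) * z.1 + (C.1 - A.1) * z.2 + A.1 : ℚ) : ℝ)
        push_cast
        ring
      · show ((B.2 - A.2 : ℚ) : ℝ) * (z.1 : ℝ) + ((C.2 - A.2 : ℚ) : ℝ) * (z.2 : ℝ) + (A.2 : ℝ)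
          = (((B.2 - A.2) * z.1 + (C.2 - A.2) * z.2 + A.2 : ℚ) : ℝ)
        push_cast
        ring
    have himg : G '' {emb (0, 0), emb (1, 0), emb (0, 1), emb (d1, d2)} =
        {emb A, emb B, emb C, emb D} := by
      rw [Set.image_insert_eq, Set.image_insert_eq, Set.image_insert_eq, Set.image_singleton]
      rw [hcomm (0, 0), hcomm (1, 0), hcomm (0, 1), hcomm (d1, d2)]
      have e1 : ((B.1 - A.1) * ((0 : ℚ), (0 : ℚ)).1 + (C.1 - A.1) * ((0 : ℚ), (0 : ℚ)).2 + A.1,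
          (B.2 - A.2) * ((0 : ℚ), (0 : ℚ)).1 + (C.2 - A.2) * ((0 : ℚ), (0 : ℚ)).2 + A.2) = A := by
        apply Prod.ext <;> norm_num
      have e2 : ((B.1 - A.1) * ((1 : ℚ), (0 : ℚ)).1 + (C.1 - A.1) * ((1 : ℚ), (0 : ℚ)).2 + A.1,
          (B.2 - A.2) * ((1 : ℚ), (0 : ℚ)).1 + (C.2 - A.2) * ((1 : ℚ), (0 : ℚ)).2 + A.2) = B := by
        apply Prod.ext <;> (norm_num)
      have e3 : ((B.1 - A.1) * ((0 : ℚ), (1 : ℚ)).1 + (C.1 - A.1) * ((0 : ℚ), (1 : ℚ)).2 + A.1,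
          (B.2 - A.2) * ((0 : ℚ), (1 : ℚ)).1 + (C.2 - A.2) * ((0 : ℚ), (1 : ℚ)).2 + A.2) = C := by
        apply Prod.ext <;> (norm_num)
      have e4 : ((B.1 - A.1) * ((d1, d2) : ℚ × ℚ).1 + (C.1 - A.1) * ((d1, d2) : ℚ × ℚ).2 + A.1,
          (B.2 - A.2) * ((d1, d2) : ℚ × ℚ).1 + (C.2 - A.2) * ((d1, d2) : ℚ × ℚ).2 + A.2) = D := by
        apply Prod.ext
        · show (B.1 - A.1) * d1 + (C.1 - A.1) * d2 + A.1 = D.1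
          rw [hd1_def, hd2_def]
          field_simp
          rw [hdd_def]
          ring
        · show (B.2 - A.2) * d1 + (C.2 - A.2) * d2 + A.2 = D.2
          rw [hd1_def, hd2_def]
          field_simp
          rw [hdd_def]
          ring
      rw [e1, e2, e3, e4]
    have htgt : G (emb Fq) = emb q := by
      rw [hcomm Fq]
      apply congrArg
      apply Prod.ext
      · show (B.1 - A.1) * Fq.1 + (C.1 - A.1) * Fq.2 + A.1 = q.1
        rw [hFq_def]
        field_simp
        rw [hdd_def]
        ring
      · show (B.2 - A.2) * Fq.1 + (C.2 - A.2) * Fq.2 + A.2 = q.2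
        rw [hFq_def]
        field_simp
        rw [hdd_def]
        ring
    rw [himg, htgt] at hmap
    exact hmap
  refine ⟨?_, key⟩
  have hdr : DenseRange emb := by
    have h1 : DenseRange ((↑) : ℚ → ℝ) := Rat.denseRange_cast
    exact h1.prodMap h1
  refine Dense.mono ?_ hdr
  rintro x ⟨q, rfl⟩
  exact key q
end

section
/- If a point P = (x, y) is derivable by straightedge-and-compass operations from a finite set S of points whose coordinates lie in a subfield F of ℝ, then x and y lie in a field obtained from F by a finite tower of extensions each of degree at most 2. -/
set_option synthInstance.maxHeartbeats 1000000
set_option maxHeartbeats 2000000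

noncomputable def euclDist (p q : ℝ × ℝ) : ℝ :=
  Real.sqrt ((p.1 - q.1) ^ 2 + (p.2 - q.2) ^ 2)

def circleSet (c : ℝ × ℝ) (r : ℝ) : Set (ℝ × ℝ) := {p | euclDist p c = r}

/-- Straightedge-and-compass derivability of points from an initial point set `S`:
one may add intersection points of two distinct lines through derived points, of a line
and a circle, or of two distinct circles (circles centered at derived points, with radii
equal to distances between derived points). -/
inductive RCDeriv (S : Set (ℝ × ℝ)) : ℝ × ℝ → Prop
  | base {p : ℝ × ℝ} : p ∈ S → RCDeriv S p
  | ll {a b c d p : ℝ × ℝ} : RCDeriv S a → RCDeriv S b → RCDeriv S c → RCDeriv S d →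
      a ≠ b → c ≠ d → lineThrough a b ≠ lineThrough c d →
      p ∈ lineThrough a b → p ∈ lineThrough c d → RCDeriv S p
  | lc {a b c d e p : ℝ × ℝ} : RCDeriv S a → RCDeriv S b → RCDeriv S c → RCDeriv S d →
      RCDeriv S e → a ≠ b →
      p ∈ lineThrough a b → p ∈ circleSet c (euclDist d e) → RCDeriv S p
  | cc {c₁ c₂ d₁ e₁ d₂ e₂ p : ℝ × ℝ} : RCDeriv S c₁ → RCDeriv S c₂ → RCDeriv S d₁ →
      RCDeriv S e₁ → RCDeriv S d₂ → RCDeriv S e₂ →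
      circleSet c₁ (euclDist d₁ e₁) ≠ circleSet c₂ (euclDist d₂ e₂) →
      p ∈ circleSet c₁ (euclDist d₁ e₁) → p ∈ circleSet c₂ (euclDist d₂ e₂) →
      RCDeriv S p

open IntermediateField

/-! ### Quadratic towers -/

def SqTower (F : Subfield ℝ) (G : ℕ → IntermediateField F ℝ) : Prop :=
  G 0 = ⊥ ∧ ∀ i, ∃ a : ℝ, a ^ 2 ∈ G i ∧ G (i + 1) = G i ⊔ IntermediateField.adjoin F {a}

def QT (F : Subfield ℝ) (x : ℝ) : Prop := ∃ n G, SqTower F G ∧ x ∈ G n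

variable {F : Subfield ℝ}

lemma SqTower.mono {G : ℕ → IntermediateField F ℝ} (hG : SqTower F G) :
    Monotone G := by
  apply monotone_nat_of_le_succ
  intro i
  obtain ⟨a, _, h2⟩ := hG.2 i
  rw [h2]; exact le_sup_left

lemma QT.merge {x y : ℝ} (hx : QT F x) (hy : QT F y) :
    ∃ n G, SqTower F G ∧ x ∈ G n ∧ y ∈ G n := by
  obtain ⟨n, G, hG, hxg⟩ := hx
  obtain ⟨m, H, hH, hyh⟩ := hy
  set L : ℕ → IntermediateField F ℝ := fun i => if i ≤ n then G i else G n ⊔ H (i - n) with hL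
  have hLtower : SqTower F L := by
    constructor
    · simp [hL, hG.1]
    · intro i
      by_cases h1 : i + 1 ≤ n
      · obtain ⟨a, ha, hstep⟩ := hG.2 i
        exact ⟨a, by simp [hL, Nat.le_of_succ_le h1, ha], by
          simp only [hL, if_pos h1, if_pos (Nat.le_of_succ_le h1)]; exact hstep⟩
      · push_neg at h1
        by_cases h2 : i ≤ n
        · have hin : i = n := by omega
          subst hin
          obtain ⟨a, ha, hstep⟩ := hH.2 0
          refine ⟨a, ?_, ?_⟩
          · have hbot : a ^ 2 ∈ (⊥ : IntermediateField F ℝ) := hH.1 ▸ ha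
            have : (⊥ : IntermediateField F ℝ) ≤ L i := by
              simp only [hL, if_pos h2]; exact bot_le
            exact this hbot
          · simp only [hL, if_neg (by omega : ¬ i + 1 ≤ i), if_pos h2]
            have : i + 1 - i = 1 := by omega
            rw [this, hstep, hH.1, bot_sup_eq]
        · push_neg at h2
          obtain ⟨a, ha, hstep⟩ := hH.2 (i - n)
          refine ⟨a, ?_, ?_⟩
          · simp only [hL, if_neg (by omega : ¬ i ≤ n)]
            have : H (i - n) ≤ G n ⊔ H (i - n) := le_sup_right
            exact this ha
          · simp only [hL, if_neg (by omega : ¬ i + 1 ≤ n), if_neg (by omega : ¬ i ≤ n)]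
            have : i + 1 - n = (i - n) + 1 := by omega
            rw [this, hstep, sup_assoc]
  refine ⟨n + m, L, hLtower, ?_, ?_⟩
  · have : G n ≤ L (n + m) := by
      by_cases hm : n + m ≤ n
      · simp only [hL, if_pos hm]; exact hG.mono (by omega)
      · simp only [hL, if_neg hm]; exact le_sup_left
    exact this hxg
  · by_cases hm : m = 0
    · subst hm
      have : y ∈ G 0 := by rw [hG.1, ← hH.1]; exact hyh
      exact (hG.mono (Nat.zero_le n) this) |> fun h => by
        by_cases hmm : n + 0 ≤ n
        · simpa [hL, hmm] using h
        · omega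
    · have hnm : ¬ n + m ≤ n := by omega
      simp only [hL, if_neg hnm]
      have : n + m - n = m := by omega
      rw [this]
      have : H m ≤ G n ⊔ H m := le_sup_right
      exact this hyh

lemma QT.ofF {x : ℝ} (hx : x ∈ F) : QT F x := by
  refine ⟨0, fun _ => ⊥, ⟨rfl, fun i => ⟨0, by simpa using zero_mem (⊥ : IntermediateField F ℝ), by simp⟩⟩, ?_⟩
  exact ⟨⟨x, hx⟩, rfl⟩

lemma QT.sqrt {x : ℝ} (hx : QT F x) : QT F (Real.sqrt x) := by
  rcases le_or_gt 0 x with hx0 | hx0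
  · obtain ⟨n, G, hG, hxg⟩ := hx
    set a := Real.sqrt x with ha
    have ha2 : a ^ 2 = x := Real.sq_sqrt hx0
    set L : ℕ → IntermediateField F ℝ := fun i =>
      if i ≤ n then G i else G n ⊔ IntermediateField.adjoin F {a} with hL
    refine ⟨n + 1, L, ⟨by simp [hL, hG.1], ?_⟩, ?_⟩
    · intro i
      by_cases h1 : i + 1 ≤ n
      · obtain ⟨b, hb, hstep⟩ := hG.2 i
        exact ⟨b, by simp [hL, Nat.le_of_succ_le h1, hb], by
          simp only [hL, if_pos h1, if_pos (Nat.le_of_succ_le h1)]; exact hstep⟩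
      · by_cases h2 : i ≤ n
        · have hin : i = n := by omega
          subst hin
          refine ⟨a, by simp [hL, h2, ha2]; exact hxg, ?_⟩
          simp only [hL, if_neg h1, if_pos h2]
        · refine ⟨0, by simpa using zero_mem (L i), ?_⟩
          simp only [hL, if_neg h2, if_neg (by omega : ¬ i + 1 ≤ n)]
          simp
    · simp only [hL, if_neg (by omega : ¬ n + 1 ≤ n)]
      have : IntermediateField.adjoin F {a} ≤ G n ⊔ IntermediateField.adjoin F {a} := le_sup_right
      exact this (mem_adjoin_simple_self F a)
  · rw [Real.sqrt_eq_zero_of_nonpos hx0.le]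
    exact QT.ofF (zero_mem F)

noncomputable def QTF (F : Subfield ℝ) : Subfield ℝ where
  carrier := {x | QT F x}
  zero_mem' := QT.ofF (zero_mem F)
  one_mem' := QT.ofF (one_mem F)
  add_mem' := by
    rintro a b ha hb
    obtain ⟨n, G, hG, h1, h2⟩ := QT.merge ha hb
    exact ⟨n, G, hG, add_mem h1 h2⟩
  mul_mem' := by
    rintro a b ha hb
    obtain ⟨n, G, hG, h1, h2⟩ := QT.merge ha hb
    exact ⟨n, G, hG, mul_mem h1 h2⟩
  neg_mem' := by
    rintro a ⟨n, G, hG, h1⟩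
    exact ⟨n, G, hG, neg_mem h1⟩
  inv_mem' := by
    rintro a ⟨n, G, hG, h1⟩
    exact ⟨n, G, hG, inv_mem h1⟩

lemma F_le_QTF : F ≤ QTF F := fun _ hx => QT.ofF hx

lemma QTF_sqrt : ∀ x ∈ QTF F, Real.sqrt x ∈ QTF F := fun _ hx => QT.sqrt hx

/-! ### Degrees of the tower steps -/

lemma step_deg {K K' : IntermediateField F ℝ} (h : K ≤ K') {a : ℝ} (ha : a ^ 2 ∈ K)
    (heq : K' = K ⊔ IntermediateField.adjoin F {a}) :
    FiniteDimensional K (extendScalars h) ∧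
      Module.finrank K (extendScalars h) ≤ 2 := by
  subst heq
  have hint : IsIntegral K a := by
    refine ⟨Polynomial.X ^ 2 - Polynomial.C ⟨a ^ 2, ha⟩, ?_, ?_⟩
    · exact Polynomial.monic_X_pow_sub_C _ (by norm_num)
    · simp [Polynomial.eval₂_sub, Polynomial.eval₂_pow]
  have heq2 : extendScalars h = IntermediateField.adjoin K {a} := by
    apply restrictScalars_injective F
    rw [extendScalars_restrictScalars, restrictScalars_adjoin_eq_sup]
  have hdvd : minpoly K a ∣ Polynomial.X ^ 2 - Polynomial.C ⟨a ^ 2, ha⟩ := by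
    apply minpoly.dvd
    simp
  have hdeg : (minpoly K a).natDegree ≤ 2 := by
    have h0 : (Polynomial.X ^ 2 - Polynomial.C (⟨a ^ 2, ha⟩ : K)) ≠ 0 :=
      (Polynomial.monic_X_pow_sub_C _ (by norm_num)).ne_zero
    have := Polynomial.natDegree_le_natDegree (Polynomial.degree_le_of_dvd hdvd h0)
    simpa using this
  rw [heq2]
  exact ⟨adjoin.finiteDimensional hint, by rw [adjoin.finrank hint]; exact hdeg⟩

lemma SqTower.toStatement {G : ℕ → IntermediateField F ℝ} (hG : SqTower F G) :
    ∃ hle : ∀ i, G i ≤ G (i + 1),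
      G 0 = ⊥ ∧
      (∀ i, FiniteDimensional (G i) (IntermediateField.extendScalars (hle i)) ∧
        Module.finrank (G i) (IntermediateField.extendScalars (hle i)) ≤ 2) := by
  have hle : ∀ i, G i ≤ G (i + 1) := by
    intro i
    obtain ⟨a, _, h2⟩ := hG.2 i
    rw [h2]; exact le_sup_left
  refine ⟨hle, hG.1, fun i => ?_⟩
  obtain ⟨a, ha, h2⟩ := hG.2 i
  exact step_deg (hle i) ha h2

/-! ### Coordinate geometry -/

lemma mem_lineThrough_iff {a b q : ℝ × ℝ} :
    q ∈ lineThrough a b ↔ ∃ t : ℝ, q.1 = a.1 + t * (b.1 - a.1) ∧ q.2 = a.2 + t * (b.2 - a.2) := by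
  constructor
  · rintro ⟨t, rfl⟩
    exact ⟨t, by simp [smul_eq_mul], by simp [smul_eq_mul]⟩
  · rintro ⟨t, h1, h2⟩
    refine ⟨t, ?_⟩
    ext <;> simp [h1, h2, smul_eq_mul]

lemma mem_circleSet_sq {c p : ℝ × ℝ} {r : ℝ} (h : p ∈ circleSet c r) :
    (p.1 - c.1) ^ 2 + (p.2 - c.2) ^ 2 = r ^ 2 := by
  have h1 : Real.sqrt ((p.1 - c.1) ^ 2 + (p.2 - c.2) ^ 2) = r := h
  have h2 := congrArg (· ^ 2) h1
  simpa [Real.sq_sqrt (by positivity : (0:ℝ) ≤ (p.1 - c.1) ^ 2 + (p.2 - c.2) ^ 2)] using h2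

lemma euclDist_sq {d e : ℝ × ℝ} : (euclDist d e) ^ 2 = (d.1 - e.1) ^ 2 + (d.2 - e.2) ^ 2 := by
  unfold euclDist
  exact Real.sq_sqrt (by positivity)

lemma ne_coords {a b : ℝ × ℝ} (h : a ≠ b) : b.1 - a.1 ≠ 0 ∨ b.2 - a.2 ≠ 0 := by
  by_contra hc
  push_neg at hc
  exact h (Prod.ext (by linarith [hc.1]) (by linarith [hc.2]))

lemma line_eq_of_cross_zero {a b c d p : ℝ × ℝ} (hab : a ≠ b) (hcd : c ≠ d)
    (hp1 : p ∈ lineThrough a b) (hp2 : p ∈ lineThrough c d)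
    (hD : (b.1 - a.1) * (d.2 - c.2) - (b.2 - a.2) * (d.1 - c.1) = 0) :
    lineThrough a b = lineThrough c d := by
  obtain ⟨t, ht1, ht2⟩ := mem_lineThrough_iff.mp hp1
  obtain ⟨s, hs1, hs2⟩ := mem_lineThrough_iff.mp hp2
  set u1 := b.1 - a.1; set u2 := b.2 - a.2
  set v1 := d.1 - c.1; set v2 := d.2 - c.2
  obtain ⟨lam, hlam, hv1, hv2⟩ :
      ∃ lam : ℝ, lam ≠ 0 ∧ v1 = lam * u1 ∧ v2 = lam * u2 := by
    rcases ne_coords hab with hu1 | hu2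
    · refine ⟨v1 / u1, ?_, (div_mul_cancel₀ v1 hu1).symm, ?_⟩
      · intro h0
        have hv1 : v1 = 0 := by
          exact (div_eq_zero_iff.mp h0).resolve_right hu1
        have hv2 : v2 = 0 := by
          have : u1 * v2 = u2 * v1 := by linarith [hD]
          rw [hv1, mul_zero] at this
          exact (mul_eq_zero.mp this).resolve_left hu1
        rcases ne_coords hcd with h | h <;> [exact h hv1; exact h hv2]
      · have : u1 * v2 = u2 * v1 := by linarith [hD]
        rw [div_mul_eq_mul_div, eq_div_iff (show u1 ≠ 0 from hu1)]
        linarith [this]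
    · by_cases hu1' : u1 = 0
      · have hv1 : v1 = 0 := by
          have : u2 * v1 = 0 := by rw [hu1'] at hD; linarith [hD]
          exact (mul_eq_zero.mp this).resolve_left hu2
        refine ⟨v2 / u2, ?_, by rw [hv1, hu1', mul_zero], (div_mul_cancel₀ v2 hu2).symm⟩
        intro h0
        have hv2 : v2 = 0 := by exact (div_eq_zero_iff.mp h0).resolve_right hu2
        rcases ne_coords hcd with h | h <;> [exact h hv1; exact h hv2]
      · refine ⟨v1 / u1, ?_, by field_simp, ?_⟩
        · intro h0
          have hv1 : v1 = 0 := by exact (div_eq_zero_iff.mp h0).resolve_right hu1'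
          have hv2 : v2 = 0 := by
            have : u1 * v2 = u2 * v1 := by linarith [hD]
            rw [hv1, mul_zero] at this
            exact (mul_eq_zero.mp this).resolve_left hu1'
          rcases ne_coords hcd with h | h <;> [exact h hv1; exact h hv2]
        · have : u1 * v2 = u2 * v1 := by linarith [hD]
          field_simp
          linarith [this]
  ext q
  simp only [mem_lineThrough_iff]
  constructor
  · rintro ⟨t', h1, h2⟩
    refine ⟨(t' - t) / lam + s, ?_, ?_⟩
    · rw [show d.1 - c.1 = lam * (b.1 - a.1) from hv1]
      have E : (t' - t) / lam * lam = t' - t := div_mul_cancel₀ _ hlam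
      linear_combination h1 - ht1 + hs1 + s * hv1 - (b.1 - a.1) * E
    · rw [show d.2 - c.2 = lam * (b.2 - a.2) from hv2]
      have E : (t' - t) / lam * lam = t' - t := div_mul_cancel₀ _ hlam
      linear_combination h2 - ht2 + hs2 + s * hv2 - (b.2 - a.2) * E
  · rintro ⟨s', h1, h2⟩
    refine ⟨t + (s' - s) * lam, ?_, ?_⟩
    · linear_combination h1 + ht1 - hs1 + (s' - s) * hv1
    · linear_combination h2 + ht2 - hs2 + (s' - s) * hv2

lemma quad_root_mem (T : Subfield ℝ) (hs : ∀ x ∈ T, Real.sqrt x ∈ T)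
    {A B C t : ℝ} (hA : A ≠ 0) (hAm : A ∈ T) (hBm : B ∈ T) (hCm : C ∈ T)
    (ht : A * t ^ 2 + B * t + C = 0) : t ∈ T := by
  have hd : (2 * A * t + B) ^ 2 = B ^ 2 - 4 * A * C := by linear_combination 4 * A * ht
  have hdm : B ^ 2 - 4 * A * C ∈ T :=
    sub_mem (pow_mem hBm 2) (mul_mem (mul_mem (by exact_mod_cast natCast_mem T 4) hAm) hCm)
  have hsq : Real.sqrt (B ^ 2 - 4 * A * C) = |2 * A * t + B| := by
    rw [← hd, Real.sqrt_sq_eq_abs]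
  have habs : |2 * A * t + B| ∈ T := hsq ▸ hs _ hdm
  have h2 : 2 * A * t + B ∈ T := by
    rcases abs_cases (2 * A * t + B) with ⟨he, _⟩ | ⟨he, _⟩
    · exact he ▸ habs
    · have := neg_mem habs
      rw [he, neg_neg] at this
      exact this
  have h2A : (2 : ℝ) * A ∈ T := mul_mem (by exact_mod_cast natCast_mem T 2) hAm
  have : t = ((2 * A * t + B) - B) / (2 * A) := by field_simp; ring
  rw [this]
  exact div_mem (sub_mem h2 hBm) h2A

lemma lineCircle_mem (T : Subfield ℝ) (hs : ∀ x ∈ T, Real.sqrt x ∈ T)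
    {α β γ : ℝ} {c p : ℝ × ℝ} {r2 : ℝ}
    (hαβ : α ≠ 0 ∨ β ≠ 0) (hα : α ∈ T) (hβ : β ∈ T) (hγ : γ ∈ T)
    (hc1 : c.1 ∈ T) (hc2 : c.2 ∈ T) (hr2 : r2 ∈ T)
    (hline : α * p.1 + β * p.2 = γ)
    (hcirc : (p.1 - c.1) ^ 2 + (p.2 - c.2) ^ 2 = r2) :
    p.1 ∈ T ∧ p.2 ∈ T := by
  have hA : α ^ 2 + β ^ 2 ≠ 0 := by
    rcases hαβ with h | h <;> positivity
  have hp2 : p.2 ∈ T := by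
    apply quad_root_mem T hs hA (add_mem (pow_mem hα 2) (pow_mem hβ 2))
      (hBm := sub_mem (mul_mem (mul_mem (neg_mem (by exact_mod_cast natCast_mem T 2)) hβ) (sub_mem hγ (mul_mem hα hc1)))
        (mul_mem (mul_mem (by exact_mod_cast natCast_mem T 2) (pow_mem hα 2)) hc2))
      (hCm := sub_mem (add_mem (pow_mem (sub_mem hγ (mul_mem hα hc1)) 2)
        (mul_mem (pow_mem hα 2) (pow_mem hc2 2))) (mul_mem (pow_mem hα 2) hr2))
    linear_combination α ^ 2 * hcirc + (-(α * p.1) - γ + β * p.2 + 2 * α * c.1) * hline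
  have hp1 : p.1 ∈ T := by
    apply quad_root_mem T hs (one_ne_zero) (one_mem T)
      (hBm := mul_mem (neg_mem (by exact_mod_cast natCast_mem T 2)) hc1)
      (hCm := sub_mem (add_mem (pow_mem hc1 2) (pow_mem (sub_mem hp2 hc2) 2)) hr2)
    linear_combination hcirc
  exact ⟨hp1, hp2⟩

/-! ### Main induction -/

lemma rc_mem (F : Subfield ℝ) (S : Set (ℝ × ℝ)) (hS : ∀ p ∈ S, p.1 ∈ F ∧ p.2 ∈ F)
    {p : ℝ × ℝ} (h : RCDeriv S p) : p.1 ∈ QTF F ∧ p.2 ∈ QTF F := by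
  induction h with
  | base hp => exact ⟨QT.ofF (hS _ hp).1, QT.ofF (hS _ hp).2⟩
  | ll ha hb hc hd hab hcd hne hp1 hp2 iha ihb ihc ihd =>
    rename_i a b c d p
    obtain ⟨t, ht1, ht2⟩ := mem_lineThrough_iff.mp hp1
    obtain ⟨s, hs1, hs2⟩ := mem_lineThrough_iff.mp hp2
    have hD : (b.1 - a.1) * (d.2 - c.2) - (b.2 - a.2) * (d.1 - c.1) ≠ 0 :=
      fun h0 => hne (line_eq_of_cross_zero hab hcd hp1 hp2 h0)
    have htD : t * ((b.1 - a.1) * (d.2 - c.2) - (b.2 - a.2) * (d.1 - c.1)) =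
        (c.1 - a.1) * (d.2 - c.2) - (c.2 - a.2) * (d.1 - c.1) := by
      linear_combination (d.1 - c.1) * ht2 - (d.1 - c.1) * hs2 - (d.2 - c.2) * ht1 +
        (d.2 - c.2) * hs1
    have htT : t ∈ QTF F := by
      have heq : t = ((c.1 - a.1) * (d.2 - c.2) - (c.2 - a.2) * (d.1 - c.1)) /
          ((b.1 - a.1) * (d.2 - c.2) - (b.2 - a.2) * (d.1 - c.1)) := by
        rw [eq_div_iff hD]
        linear_combination htD
      rw [heq]
      exact div_mem
        (sub_mem (mul_mem (sub_mem ihc.1 iha.1) (sub_mem ihd.2 ihc.2))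
          (mul_mem (sub_mem ihc.2 iha.2) (sub_mem ihd.1 ihc.1)))
        (sub_mem (mul_mem (sub_mem ihb.1 iha.1) (sub_mem ihd.2 ihc.2))
          (mul_mem (sub_mem ihb.2 iha.2) (sub_mem ihd.1 ihc.1)))
    constructor
    · rw [ht1]; exact add_mem iha.1 (mul_mem htT (sub_mem ihb.1 iha.1))
    · rw [ht2]; exact add_mem iha.2 (mul_mem htT (sub_mem ihb.2 iha.2))
  | lc ha hb hc hd he hab hp1 hp2 iha ihb ihc ihd ihe =>
    rename_i a b c d e p
    have hcirc : (p.1 - c.1) ^ 2 + (p.2 - c.2) ^ 2 = (d.1 - e.1) ^ 2 + (d.2 - e.2) ^ 2 :=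
      (mem_circleSet_sq hp2).trans euclDist_sq
    have hline : (b.2 - a.2) * p.1 + (-(b.1 - a.1)) * p.2 =
        (b.2 - a.2) * a.1 - (b.1 - a.1) * a.2 := by
      obtain ⟨t, ht1, ht2⟩ := mem_lineThrough_iff.mp hp1
      linear_combination (b.2 - a.2) * ht1 - (b.1 - a.1) * ht2
    have hαβ : (b.2 - a.2) ≠ 0 ∨ (-(b.1 - a.1)) ≠ 0 := by
      rcases ne_coords hab with h | h
      · exact Or.inr (neg_ne_zero.mpr h)
      · exact Or.inl h
    exact lineCircle_mem (QTF F) QTF_sqrt hαβ (sub_mem ihb.2 iha.2)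
      (neg_mem (sub_mem ihb.1 iha.1))
      (sub_mem (mul_mem (sub_mem ihb.2 iha.2) iha.1) (mul_mem (sub_mem ihb.1 iha.1) iha.2))
      ihc.1 ihc.2
      (add_mem (pow_mem (sub_mem ihd.1 ihe.1) 2) (pow_mem (sub_mem ihd.2 ihe.2) 2))
      hline hcirc
  | cc h1 h2 h3 h4 h5 h6 hne hp1 hp2 ih1 ih2 ih3 ih4 ih5 ih6 =>
    rename_i c₁ c₂ d₁ e₁ d₂ e₂ p
    have hcirc1 : (p.1 - c₁.1) ^ 2 + (p.2 - c₁.2) ^ 2 =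
        (d₁.1 - e₁.1) ^ 2 + (d₁.2 - e₁.2) ^ 2 :=
      (mem_circleSet_sq hp1).trans euclDist_sq
    have hcirc2 : (p.1 - c₂.1) ^ 2 + (p.2 - c₂.2) ^ 2 =
        (d₂.1 - e₂.1) ^ 2 + (d₂.2 - e₂.2) ^ 2 :=
      (mem_circleSet_sq hp2).trans euclDist_sq
    have hcc : c₁ ≠ c₂ := by
      intro he
      apply hne
      have hr : euclDist d₁ e₁ = euclDist d₂ e₂ := by
        have e1 : euclDist p c₁ = euclDist d₁ e₁ := hp1
        have e2 : euclDist p c₂ = euclDist d₂ e₂ := hp2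
        rw [← e1, ← e2, he]
      rw [he, hr]
    have hαβ : (2 * (c₂.1 - c₁.1)) ≠ 0 ∨ (2 * (c₂.2 - c₁.2)) ≠ 0 := by
      rcases ne_coords hcc with h | h
      · exact Or.inl (mul_ne_zero two_ne_zero h)
      · exact Or.inr (mul_ne_zero two_ne_zero h)
    have hline : (2 * (c₂.1 - c₁.1)) * p.1 + (2 * (c₂.2 - c₁.2)) * p.2 =
        ((d₁.1 - e₁.1) ^ 2 + (d₁.2 - e₁.2) ^ 2) - ((d₂.1 - e₂.1) ^ 2 + (d₂.2 - e₂.2) ^ 2)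
          + c₂.1 ^ 2 + c₂.2 ^ 2 - c₁.1 ^ 2 - c₁.2 ^ 2 := by
      linear_combination hcirc1 - hcirc2
    have h2T : (2 : ℝ) ∈ QTF F := by exact_mod_cast natCast_mem (QTF F) 2
    exact lineCircle_mem (QTF F) QTF_sqrt hαβ
      (mul_mem h2T (sub_mem ih2.1 ih1.1)) (mul_mem h2T (sub_mem ih2.2 ih1.2))
      (sub_mem (sub_mem (add_mem (add_mem (sub_mem
        (add_mem (pow_mem (sub_mem ih3.1 ih4.1) 2) (pow_mem (sub_mem ih3.2 ih4.2) 2))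
        (add_mem (pow_mem (sub_mem ih5.1 ih6.1) 2) (pow_mem (sub_mem ih5.2 ih6.2) 2)))
        (pow_mem ih2.1 2)) (pow_mem ih2.2 2)) (pow_mem ih1.1 2)) (pow_mem ih1.2 2))
      ih1.1 ih1.2
      (add_mem (pow_mem (sub_mem ih3.1 ih4.1) 2) (pow_mem (sub_mem ih3.2 ih4.2) 2))
      hline hcirc1

theorem rcderiv_coords_in_quadratic_tower (F : Subfield ℝ) (S : Set (ℝ × ℝ))
    (hfin : S.Finite) (hS : ∀ p ∈ S, p.1 ∈ F ∧ p.2 ∈ F)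
    (x y : ℝ) (h : RCDeriv S (x, y)) :
    ∃ (n : ℕ) (G : ℕ → IntermediateField F ℝ) (hle : ∀ i, G i ≤ G (i + 1)),
      G 0 = ⊥ ∧
      (∀ i, FiniteDimensional (G i) (IntermediateField.extendScalars (hle i)) ∧
        Module.finrank (G i) (IntermediateField.extendScalars (hle i)) ≤ 2) ∧
      x ∈ G n ∧ y ∈ G n := by
  have hm := rc_mem F S hS h
  obtain ⟨n, G, hG, hx, hy⟩ := QT.merge hm.1 hm.2
  obtain ⟨hle, h0, hstep⟩ := hG.toStatement
  exact ⟨n, G, hle, h0, hstep, hx, hy⟩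
end
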